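/- arXiv:1205.4748 — 4 statements merged into one kernel-verified Lean document; each statement's English description precedes it below -/
import Mathlib

section
/- For every admissible strategy ϑ ∈ Θ and all integers 0 ≤ k ≤ l ≤ T, the conditional mean–variance criterion satisfies the recursion U_k(ϑ) = E[U_l(ϑ) | F_k] − (γ/2) · Var[ E[Σ_{i=l+1}^T ϑ_i ΔS_i | F_l] + V_l(x,ϑ) | F_k ] P-almost surely. -/
open MeasureTheory Finset

noncomputable section

namespace TCMV

variable {Ω : Type*}

/-- Conditional variance of `X` given the σ-algebra `m`. -/
def condVar [MeasurableSpace Ω] (μ : Measure Ω) (m : MeasurableSpace Ω) (X : Ω → ℝ) : Ω → ℝ :=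
  μ[fun ω => (X ω - (μ[X|m]) ω) ^ 2 | m]

/-- Conditional covariance of `X` and `Y` given the σ-algebra `m`. -/
def condCov [MeasurableSpace Ω] (μ : Measure Ω) (m : MeasurableSpace Ω) (X Y : Ω → ℝ) : Ω → ℝ :=
  fun ω => (μ[fun ω' => X ω' * Y ω'|m]) ω - (μ[X|m]) ω * (μ[Y|m]) ω

variable [m0 : MeasurableSpace Ω]

/-- The increment `ΔS_k = S_k - S_{k-1}`. -/
def dS (S : ℕ → Ω → ℝ) (k : ℕ) : Ω → ℝ := fun ω => S k ω - S (k - 1) ω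

/-- The predictable (drift) part of the Doob decomposition: `ΔA_k = E[ΔS_k | F_{k-1}]`. -/
def dA (μ : Measure Ω) (ℱ : Filtration ℕ m0) (S : ℕ → Ω → ℝ) (k : ℕ) : Ω → ℝ :=
  μ[dS S k | ℱ (k - 1)]

/-- The martingale part of the Doob decomposition: `ΔM_k = ΔS_k - E[ΔS_k | F_{k-1}]`. -/
def dM (μ : Measure Ω) (ℱ : Filtration ℕ m0) (S : ℕ → Ω → ℝ) (k : ℕ) : Ω → ℝ :=
  fun ω => dS S k ω - dA μ ℱ S k ω

/-- The set `Θ` of admissible strategies: predictable with the two square-integrability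
properties. -/
def Admissible (μ : Measure Ω) (ℱ : Filtration ℕ m0) (S : ℕ → Ω → ℝ) (T : ℕ)
    (ϑ : ℕ → Ω → ℝ) : Prop :=
  (∀ k ∈ Finset.Icc 1 T, StronglyMeasurable[ℱ (k - 1)] (ϑ k)) ∧
  Integrable (fun ω => ∑ k ∈ Finset.Icc 1 T,
      (ϑ k ω) ^ 2 * (μ[fun ω' => (dM μ ℱ S k ω') ^ 2 | ℱ (k - 1)]) ω) μ ∧
  Integrable (fun ω => (∑ k ∈ Finset.Icc 1 T, |ϑ k ω * dA μ ℱ S k ω|) ^ 2) μ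

/-- The wealth process `V_k(x, ϑ) = x + ∑_{i=1}^k ϑ_i ΔS_i`. -/
def wealth (S : ℕ → Ω → ℝ) (x : ℝ) (ϑ : ℕ → Ω → ℝ) (k : ℕ) : Ω → ℝ :=
  fun ω => x + ∑ i ∈ Finset.Icc 1 k, ϑ i ω * dS S i ω

/-- The conditional mean–variance criterion
`U_k(ϑ) = E[V_T(x,ϑ)|F_k] - (γ/2) Var[V_T(x,ϑ)|F_k]`. -/
def U (μ : Measure Ω) (ℱ : Filtration ℕ m0) (S : ℕ → Ω → ℝ) (T : ℕ) (x γ : ℝ)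
    (ϑ : ℕ → Ω → ℝ) (k : ℕ) : Ω → ℝ :=
  fun ω => (μ[wealth S x ϑ T | ℱ k]) ω - γ / 2 * condVar μ (ℱ k) (wealth S x ϑ T) ω

/-- The local perturbation `ϑ + δ 1_{{k}}` of `ϑ` by `δ` at time `k`. -/
def perturb (ϑ δ : ℕ → Ω → ℝ) (k : ℕ) : ℕ → Ω → ℝ :=
  fun j => if j = k then (fun ω => ϑ k ω + δ k ω) else ϑ j

/-- A strategy is locally mean–variance efficient if local perturbations never increase the
conditional mean–variance criterion. -/
def IsLMVE (μ : Measure Ω) (ℱ : Filtration ℕ m0) (S : ℕ → Ω → ℝ) (T : ℕ) (x γ : ℝ)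
    (θ : ℕ → Ω → ℝ) : Prop :=
  ∀ k ∈ Finset.Icc 1 T, ∀ δ : ℕ → Ω → ℝ, Admissible μ ℱ S T δ →
    ∀ᵐ ω ∂μ, U μ ℱ S T x γ (perturb θ δ k) (k - 1) ω ≤ U μ ℱ S T x γ θ (k - 1) ω

/-- The structure condition (SC): `ΔA_k = 0` a.s. on `{E[(ΔM_k)^2 | F_{k-1}] = 0}`. -/
def SC (μ : Measure Ω) (ℱ : Filtration ℕ m0) (S : ℕ → Ω → ℝ) (T : ℕ) : Prop :=
  ∀ k ∈ Finset.Icc 1 T, ∀ᵐ ω ∂μ,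
    (μ[fun ω' => (dM μ ℱ S k ω') ^ 2 | ℱ (k - 1)]) ω = 0 → dA μ ℱ S k ω = 0

/-- The process `λ_k = ΔA_k / E[(ΔM_k)^2 | F_{k-1}]` (with the convention `0/0 = 0`). -/
def lam (μ : Measure Ω) (ℱ : Filtration ℕ m0) (S : ℕ → Ω → ℝ) (k : ℕ) : Ω → ℝ :=
  fun ω => dA μ ℱ S k ω / (μ[fun ω' => (dM μ ℱ S k ω') ^ 2 | ℱ (k - 1)]) ω

/-- The mean–variance tradeoff process `K_k = ∑_{i=1}^k λ_i ΔA_i`. -/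
def MVT (μ : Measure Ω) (ℱ : Filtration ℕ m0) (S : ℕ → Ω → ℝ) (k : ℕ) : Ω → ℝ :=
  fun ω => ∑ i ∈ Finset.Icc 1 k, lam μ ℱ S i ω * dA μ ℱ S i ω

/-- The Galtchouk–Kunita–Watanabe integrand of `Y_T(ψ) = ∑_{i=1}^T ψ_i ΔA_i` with respect to the
martingale part `M`: `ξ_k(ψ) = E[Y_T(ψ) ΔM_k | F_{k-1}] / E[(ΔM_k)^2 | F_{k-1}]`
(with the convention `0/0 = 0`). -/
def gkw (μ : Measure Ω) (ℱ : Filtration ℕ m0) (S : ℕ → Ω → ℝ) (T : ℕ)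
    (ψ : ℕ → Ω → ℝ) (k : ℕ) : Ω → ℝ :=
  fun ω =>
    (μ[fun ω' => (∑ i ∈ Finset.Icc 1 T, ψ i ω' * dA μ ℱ S i ω') * dM μ ℱ S k ω' | ℱ (k - 1)]) ω
      / (μ[fun ω' => (dM μ ℱ S k ω') ^ 2 | ℱ (k - 1)]) ω


section Aux

variable {Ω : Type*} {m0 : MeasurableSpace Ω} {μ : Measure Ω} [IsProbabilityMeasure μ]

/-- Product of two `L²` functions is integrable. -/
lemma integrable_mul_of_mem2 {f g : Ω → ℝ} (hf : MemLp f 2 μ) (hg : MemLp g 2 μ) :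
    Integrable (fun ω => f ω * g ω) μ := by
  refine Integrable.mono' (hf.integrable_sq.add hg.integrable_sq)
    (hf.aestronglyMeasurable.mul hg.aestronglyMeasurable) (ae_of_all _ fun ω => ?_)
  simp only [Pi.add_apply, Real.norm_eq_abs]
  nlinarith [abs_mul (f ω) (g ω), sq_abs (f ω), sq_abs (g ω),
    two_mul_le_add_sq (|f ω|) (|g ω|), mul_nonneg (abs_nonneg (f ω)) (abs_nonneg (g ω))]

lemma aesm_sq {f : Ω → ℝ} (hf : AEStronglyMeasurable f μ) :
    AEStronglyMeasurable (fun ω => f ω ^ 2) μ := by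
  have := hf.mul hf
  simp only [pow_two]
  exact this

/-- Conditional Jensen for the square function. -/
lemma sq_condExp_le {m : MeasurableSpace Ω} (hm : m ≤ m0) {f : Ω → ℝ} (hf : MemLp f 2 μ) :
    ∀ᵐ ω ∂μ, ((μ[f|m]) ω) ^ 2 ≤ (μ[fun ω' => f ω' ^ 2|m]) ω := by
  have hfi : Integrable f μ := hf.integrable one_le_two
  have hf2 : Integrable (fun ω => f ω ^ 2) μ := hf.integrable_sq
  have key : ∀ q : ℚ, ∀ᵐ ω ∂μ,
      2 * (q : ℝ) * (μ[f|m]) ω - (q : ℝ) ^ 2 ≤ (μ[fun ω' => f ω' ^ 2|m]) ω := by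
    intro q
    have hle : (fun ω => 2 * (q : ℝ) * f ω - (q : ℝ) ^ 2) ≤ᵐ[μ] fun ω => f ω ^ 2 := by
      refine ae_of_all _ fun ω => ?_
      show 2 * (q : ℝ) * f ω - (q : ℝ) ^ 2 ≤ f ω ^ 2
      nlinarith [sq_nonneg (f ω - (q : ℝ))]
    have hint1 : Integrable (fun ω => 2 * (q : ℝ) * f ω - (q : ℝ) ^ 2) μ :=
      (hfi.const_mul _).sub (integrable_const _)
    have hmono := condExp_mono (m := m) hint1 hf2 hle
    have h1 : μ[fun ω => 2 * (q : ℝ) * f ω - (q : ℝ) ^ 2|m]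
        =ᵐ[μ] fun ω => 2 * (q : ℝ) * (μ[f|m]) ω - (q : ℝ) ^ 2 := by
      have hsub := condExp_sub (μ := μ) (m := m) (f := fun ω => 2 * (q : ℝ) * f ω)
        (g := fun _ : Ω => (q : ℝ) ^ 2) (hfi.const_mul _) (integrable_const _)
      have hsmul : μ[fun ω => 2 * (q : ℝ) * f ω|m]
          =ᵐ[μ] fun ω => 2 * (q : ℝ) * (μ[f|m]) ω := by
        have h := condExp_smul (μ := μ) (m := m) (2 * (q : ℝ)) f
        rw [show (2 * (q : ℝ)) • f = fun ω => 2 * (q : ℝ) * f ω from rfl] at h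
        exact h
      have hconst : μ[fun _ : Ω => (q : ℝ) ^ 2|m] = fun _ => (q : ℝ) ^ 2 := condExp_const hm _
      have heq : (fun ω => 2 * (q : ℝ) * f ω - (q : ℝ) ^ 2)
          = (fun ω => 2 * (q : ℝ) * f ω) - fun _ : Ω => (q : ℝ) ^ 2 := rfl
      rw [heq]
      filter_upwards [hsub, hsmul] with ω hω h2ω
      simp only [Pi.sub_apply] at hω ⊢
      rw [hω, h2ω, hconst]
    filter_upwards [hmono, h1] with ω hω h1ω
    rw [← h1ω]
    exact hω
  rw [← ae_all_iff] at key
  filter_upwards [key] with ω hω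
  by_contra hlt
  push_neg at hlt
  set a := (μ[f|m]) ω
  set b := (μ[fun ω' => f ω' ^ 2|m]) ω
  have hε : (0 : ℝ) < a ^ 2 - b := by linarith
  obtain ⟨q, hq⟩ := exists_rat_near a (Real.sqrt_pos.2 hε)
  have h2 : (a - (q : ℝ)) ^ 2 < a ^ 2 - b := by
    have : |a - (q : ℝ)| ^ 2 < Real.sqrt (a ^ 2 - b) ^ 2 := by
      apply pow_lt_pow_left₀ hq (abs_nonneg _) two_ne_zero
    rwa [sq_abs, Real.sq_sqrt hε.le] at this
  have := hω q
  nlinarith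

/-- The conditional expectation of an `L²` function is in `L²`. -/
lemma memL2_condexp {m : MeasurableSpace Ω} (hm : m ≤ m0) {f : Ω → ℝ} (hf : MemLp f 2 μ) :
    MemLp (μ[f|m]) 2 μ := by
  refine (memLp_two_iff_integrable_sq
    ((stronglyMeasurable_condExp.mono hm).aestronglyMeasurable)).2 ?_
  refine Integrable.mono'
    (show Integrable (μ[fun ω' => f ω' ^ 2|m]) μ from integrable_condExp)
    (aesm_sq ((stronglyMeasurable_condExp.mono hm).aestronglyMeasurable)) ?_
  filter_upwards [sq_condExp_le hm hf, condExp_nonneg (μ := μ) (m := m)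
    (f := fun ω' => f ω' ^ 2) (ae_of_all _ fun ω => sq_nonneg _)] with ω h1 _
  rw [Real.norm_eq_abs, abs_of_nonneg (sq_nonneg _)]
  exact h1

lemma condVar_congr_ae {m : MeasurableSpace Ω} {X Y : Ω → ℝ} (h : X =ᵐ[μ] Y) :
    @condVar Ω m0 μ m X =ᵐ[μ] @condVar Ω m0 μ m Y := by
  unfold condVar
  refine condExp_congr_ae ?_
  have hc : μ[X|m] =ᵐ[μ] μ[Y|m] := condExp_congr_ae h
  filter_upwards [h, hc] with ω h1 h2
  rw [h1, h2]

/-- The conditional variance of an `L²` function equals `E[X²|m] - E[X|m]²`. -/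
lemma condVar_eq {m : MeasurableSpace Ω} (hm : m ≤ m0) {X : Ω → ℝ} (hX : MemLp X 2 μ) :
    @condVar Ω m0 μ m X =ᵐ[μ] fun ω => (μ[fun ω' => X ω' ^ 2|m]) ω - ((μ[X|m]) ω) ^ 2 := by
  set g := μ[X|m] with hg_def
  have hXi : Integrable X μ := hX.integrable one_le_two
  have hg2 : MemLp g 2 μ := memL2_condexp hm hX
  have hX2 : Integrable (fun ω => X ω ^ 2) μ := hX.integrable_sq
  have hgX : Integrable (fun ω => g ω * X ω) μ := integrable_mul_of_mem2 hg2 hX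
  have hg2i : Integrable (fun ω => g ω ^ 2) μ := hg2.integrable_sq
  have hsmg : StronglyMeasurable[m] g := stronglyMeasurable_condExp
  have hexp : (fun ω => (X ω - g ω) ^ 2)
      = (fun ω => X ω ^ 2 - 2 * (g ω * X ω)) + fun ω => g ω ^ 2 := by
    funext ω; simp only [Pi.add_apply]; ring
  have h1 : μ[fun ω => (X ω - g ω) ^ 2|m]
      =ᵐ[μ] μ[fun ω => X ω ^ 2 - 2 * (g ω * X ω)|m] + μ[fun ω => g ω ^ 2|m] := by
    rw [show μ[fun ω => (X ω - g ω) ^ 2|m]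
        = μ[(fun ω => X ω ^ 2 - 2 * (g ω * X ω)) + fun ω => g ω ^ 2|m] by rw [← hexp]]
    exact condExp_add (hX2.sub (hgX.const_mul 2)) hg2i _
  have h2 : μ[fun ω => X ω ^ 2 - 2 * (g ω * X ω)|m]
      =ᵐ[μ] μ[fun ω => X ω ^ 2|m] - μ[fun ω => 2 * (g ω * X ω)|m] := by
    have := condExp_sub (μ := μ) (m := m) (f := fun ω => X ω ^ 2)
      (g := fun ω => 2 * (g ω * X ω)) hX2 (hgX.const_mul 2)
    exact this
  have h3 : μ[fun ω => 2 * (g ω * X ω)|m]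
      =ᵐ[μ] fun ω => 2 * (μ[fun ω' => g ω' * X ω'|m]) ω := by
    have h := condExp_smul (μ := μ) (m := m) (2 : ℝ) (fun ω => g ω * X ω)
    rw [show (2 : ℝ) • (fun ω => g ω * X ω) = fun ω => 2 * (g ω * X ω) from rfl] at h
    exact h
  have h4 : μ[fun ω' => g ω' * X ω'|m] =ᵐ[μ] fun ω => g ω * g ω := by
    have := condExp_mul_of_stronglyMeasurable_left (μ := μ) hsmg
      (show Integrable (g * X) μ from hgX) hXi
    filter_upwards [this] with ω hω
    exact hω
  have h5 : μ[fun ω => g ω ^ 2|m] = fun ω => g ω ^ 2 := by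
    refine condExp_of_stronglyMeasurable hm ?_ hg2i
    have h := hsmg.mul hsmg
    have : (fun ω => g ω ^ 2) = fun ω => g ω * g ω := by funext ω; rw [pow_two]
    rw [this]
    exact h
  have hcv : @condVar Ω m0 μ m X = μ[fun ω => (X ω - g ω) ^ 2|m] := rfl
  rw [hcv]
  filter_upwards [h1, h2, h3, h4] with ω e1 e2 e3 e4
  have e3' : (μ[fun ω => 2 * (g ω * X ω)|m]) ω = 2 * (μ[fun ω' => g ω' * X ω'|m]) ω := e3
  simp only [Pi.add_apply, Pi.sub_apply] at e1 e2 ⊢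
  rw [e1, e2, e3', e4, h5]
  ring

end Aux

section L2

variable {Ω : Type*} [m0 : MeasurableSpace Ω] (μ : Measure Ω) [IsProbabilityMeasure μ]
  (ℱ : Filtration ℕ m0) (S : ℕ → Ω → ℝ)

lemma memL2_dS (hL2 : ∀ k, MemLp (S k) 2 μ) (i : ℕ) : MemLp (dS S i) 2 μ :=
  (hL2 i).sub (hL2 (i - 1))

lemma memL2_dA (hL2 : ∀ k, MemLp (S k) 2 μ) (i : ℕ) : MemLp (dA μ ℱ S i) 2 μ :=
  memL2_condexp (ℱ.le _) (memL2_dS μ S hL2 i)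

lemma memL2_dM (hL2 : ∀ k, MemLp (S k) 2 μ) (i : ℕ) : MemLp (dM μ ℱ S i) 2 μ :=
  (memL2_dS μ S hL2 i).sub (memL2_dA μ ℱ S hL2 i)

lemma memL2_theta_dA {T : ℕ} {ϑ : ℕ → Ω → ℝ} (hϑ : Admissible μ ℱ S T ϑ)
    {i : ℕ} (hi : i ∈ Finset.Icc 1 T) :
    MemLp (fun ω => ϑ i ω * dA μ ℱ S i ω) 2 μ := by
  have hmeas : AEStronglyMeasurable (fun ω => ϑ i ω * dA μ ℱ S i ω) μ :=
    (((hϑ.1 i hi).mono (ℱ.le _)).aestronglyMeasurable).mul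
      ((stronglyMeasurable_condExp.mono (ℱ.le _)).aestronglyMeasurable)
  refine (memLp_two_iff_integrable_sq hmeas).2 ?_
  refine Integrable.mono' hϑ.2.2 (aesm_sq hmeas) (ae_of_all _ fun ω => ?_)
  rw [Real.norm_eq_abs, abs_of_nonneg (sq_nonneg _)]
  have h1 : |ϑ i ω * dA μ ℱ S i ω| ≤ ∑ k ∈ Finset.Icc 1 T, |ϑ k ω * dA μ ℱ S k ω| :=
    Finset.single_le_sum (f := fun k => |ϑ k ω * dA μ ℱ S k ω|)
      (fun k _ => abs_nonneg _) hi
  calc (ϑ i ω * dA μ ℱ S i ω) ^ 2 = |ϑ i ω * dA μ ℱ S i ω| ^ 2 := (sq_abs _).symm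
    _ ≤ (∑ k ∈ Finset.Icc 1 T, |ϑ k ω * dA μ ℱ S k ω|) ^ 2 :=
        pow_le_pow_left₀ (abs_nonneg _) h1 2

lemma memL2_theta_dM (hL2 : ∀ k, MemLp (S k) 2 μ) {T : ℕ} {ϑ : ℕ → Ω → ℝ}
    (hϑ : Admissible μ ℱ S T ϑ) {i : ℕ} (hi : i ∈ Finset.Icc 1 T) :
    MemLp (fun ω => ϑ i ω * dM μ ℱ S i ω) 2 μ := by
  have hm : ℱ (i - 1) ≤ m0 := ℱ.le _
  have hθ : StronglyMeasurable[ℱ (i - 1)] (ϑ i) := hϑ.1 i hi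
  have hdM : MemLp (dM μ ℱ S i) 2 μ := memL2_dM μ ℱ S hL2 i
  have hdM2 : Integrable (fun ω => dM μ ℱ S i ω ^ 2) μ := hdM.integrable_sq
  have hEnn : 0 ≤ᵐ[μ] μ[fun ω' => (dM μ ℱ S i ω') ^ 2|ℱ (i - 1)] :=
    condExp_nonneg (ae_of_all _ fun ω => sq_nonneg _)
  have hsum := hϑ.2.1
  have hterms : ∀ᵐ ω ∂μ, ∀ k, k ∈ Finset.Icc 1 T →
      0 ≤ (ϑ k ω) ^ 2 * (μ[fun ω' => (dM μ ℱ S k ω') ^ 2|ℱ (k - 1)]) ω := by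
    rw [ae_all_iff]
    intro k
    filter_upwards [condExp_nonneg (μ := μ) (m := ℱ (k - 1))
      (f := fun ω' => (dM μ ℱ S k ω') ^ 2) (ae_of_all _ fun ω => sq_nonneg _)] with ω hω _
    exact mul_nonneg (sq_nonneg _) hω
  set f : ℕ → Ω → ℝ := fun n ω => min (ϑ i ω ^ 2) n with hf_def
  have hf_meas : ∀ n : ℕ, StronglyMeasurable[ℱ (i - 1)] (f n) := by
    intro n
    have h1 : StronglyMeasurable[ℱ (i - 1)] (fun ω => ϑ i ω ^ 2) := by
      have := hθ.mul hθ
      have heq : (fun ω => ϑ i ω ^ 2) = fun ω => ϑ i ω * ϑ i ω := by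
        funext ω; rw [pow_two]
      rw [heq]; exact this
    exact (h1.measurable.min measurable_const).stronglyMeasurable
  have hf_nonneg : ∀ n ω, 0 ≤ f n ω := fun n ω => le_min (sq_nonneg _) (Nat.cast_nonneg n)
  have hf_le : ∀ n ω, f n ω ≤ ϑ i ω ^ 2 := fun n ω => min_le_left _ _
  have hf_bdd : ∀ (n : ℕ) ω, f n ω ≤ (n : ℝ) := fun n ω => min_le_right _ _
  have hfint : ∀ n : ℕ, Integrable (fun ω => f n ω * dM μ ℱ S i ω ^ 2) μ := by
    intro n
    refine Integrable.bdd_mul (c := (n : ℝ)) hdM2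
      ((hf_meas n).mono hm).aestronglyMeasurable (ae_of_all _ fun ω => ?_)
    rw [Real.norm_eq_abs, abs_of_nonneg (hf_nonneg n ω)]
    exact hf_bdd n ω
  set B : ℝ := ∫ ω, (∑ k ∈ Finset.Icc 1 T,
      (ϑ k ω) ^ 2 * (μ[fun ω' => (dM μ ℱ S k ω') ^ 2|ℱ (k - 1)]) ω) ∂μ with hB_def
  have key : ∀ n : ℕ, ∫ ω, f n ω * dM μ ℱ S i ω ^ 2 ∂μ ≤ B := by
    intro n
    have hpull : μ[(f n * fun ω => dM μ ℱ S i ω ^ 2)|ℱ (i - 1)]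
        =ᵐ[μ] f n * μ[fun ω => dM μ ℱ S i ω ^ 2|ℱ (i - 1)] :=
      condExp_mul_of_stronglyMeasurable_left (hf_meas n) (hfint n) hdM2
    have hfEint : Integrable
        (fun ω => f n ω * (μ[fun ω' => (dM μ ℱ S i ω') ^ 2|ℱ (i - 1)]) ω) μ := by
      refine Integrable.bdd_mul (c := (n : ℝ))
        (show Integrable (μ[fun ω' => (dM μ ℱ S i ω') ^ 2|ℱ (i - 1)]) μ from integrable_condExp)
        ((hf_meas n).mono hm).aestronglyMeasurable (ae_of_all _ fun ω => ?_)
      rw [Real.norm_eq_abs, abs_of_nonneg (hf_nonneg n ω)]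
      exact hf_bdd n ω
    have h1 : ∫ ω, f n ω * dM μ ℱ S i ω ^ 2 ∂μ
        = ∫ ω, f n ω * (μ[fun ω' => (dM μ ℱ S i ω') ^ 2|ℱ (i - 1)]) ω ∂μ := by
      rw [show (∫ ω, f n ω * dM μ ℱ S i ω ^ 2 ∂μ)
          = ∫ ω, (μ[(f n * fun ω' => dM μ ℱ S i ω' ^ 2)|ℱ (i - 1)]) ω ∂μ from
        (integral_condExp (f := f n * fun ω' => dM μ ℱ S i ω' ^ 2) hm).symm]
      refine integral_congr_ae ?_
      filter_upwards [hpull] with ω hω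
      simpa using hω
    rw [h1]
    refine integral_mono_ae hfEint hsum ?_
    filter_upwards [hEnn, hterms] with ω hE hterm
    have h2 : f n ω * (μ[fun ω' => (dM μ ℱ S i ω') ^ 2|ℱ (i - 1)]) ω
        ≤ ϑ i ω ^ 2 * (μ[fun ω' => (dM μ ℱ S i ω') ^ 2|ℱ (i - 1)]) ω :=
      mul_le_mul_of_nonneg_right (hf_le n ω) hE
    refine h2.trans ?_
    exact Finset.single_le_sum (f := fun k =>
      (ϑ k ω) ^ 2 * (μ[fun ω' => (dM μ ℱ S k ω') ^ 2|ℱ (k - 1)]) ω) (fun k hk => hterm k hk) hi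
  have hlint : ∫⁻ ω, ENNReal.ofReal (ϑ i ω ^ 2 * dM μ ℱ S i ω ^ 2) ∂μ ≤ ENNReal.ofReal B := by
    have hsup : ∀ ω, (⨆ n : ℕ, ENNReal.ofReal (f n ω * dM μ ℱ S i ω ^ 2))
        = ENNReal.ofReal (ϑ i ω ^ 2 * dM μ ℱ S i ω ^ 2) := by
      intro ω
      refine le_antisymm (iSup_le fun n => ENNReal.ofReal_le_ofReal
        (mul_le_mul_of_nonneg_right (hf_le n ω) (sq_nonneg _))) ?_
      refine le_iSup_of_le ⌈ϑ i ω ^ 2⌉₊ (le_of_eq ?_)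
      congr 1
      show ϑ i ω ^ 2 * dM μ ℱ S i ω ^ 2 = min (ϑ i ω ^ 2) (⌈ϑ i ω ^ 2⌉₊ : ℝ) * dM μ ℱ S i ω ^ 2
      rw [min_eq_left (Nat.le_ceil _)]
    have hmeasn : ∀ n : ℕ, AEMeasurable
        (fun ω => ENNReal.ofReal (f n ω * dM μ ℱ S i ω ^ 2)) μ :=
      fun n => ((hfint n).aestronglyMeasurable.aemeasurable).ennreal_ofReal
    have hmono : ∀ᵐ ω ∂μ, Monotone fun n : ℕ => ENNReal.ofReal (f n ω * dM μ ℱ S i ω ^ 2) := by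
      refine ae_of_all _ fun ω a b hab => ENNReal.ofReal_le_ofReal ?_
      exact mul_le_mul_of_nonneg_right
        (min_le_min le_rfl (Nat.cast_le.2 hab)) (sq_nonneg _)
    calc ∫⁻ ω, ENNReal.ofReal (ϑ i ω ^ 2 * dM μ ℱ S i ω ^ 2) ∂μ
        = ∫⁻ ω, ⨆ n : ℕ, ENNReal.ofReal (f n ω * dM μ ℱ S i ω ^ 2) ∂μ :=
          lintegral_congr fun ω => (hsup ω).symm
      _ = ⨆ n : ℕ, ∫⁻ ω, ENNReal.ofReal (f n ω * dM μ ℱ S i ω ^ 2) ∂μ :=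
          lintegral_iSup' hmeasn hmono
      _ ≤ ENNReal.ofReal B := by
          refine iSup_le fun n => ?_
          rw [← ofReal_integral_eq_lintegral_ofReal (hfint n)
            (ae_of_all _ fun ω => mul_nonneg (hf_nonneg n ω) (sq_nonneg _))]
          exact ENNReal.ofReal_le_ofReal (key n)
  have hmeas : AEStronglyMeasurable (fun ω => ϑ i ω * dM μ ℱ S i ω) μ :=
    ((hθ.mono hm).aestronglyMeasurable).mul hdM.aestronglyMeasurable
  refine (memLp_two_iff_integrable_sq hmeas).2 ?_
  refine ⟨aesm_sq hmeas, ?_⟩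
  rw [hasFiniteIntegral_iff_ofReal (ae_of_all _ fun ω => sq_nonneg _)]
  calc ∫⁻ ω, ENNReal.ofReal ((ϑ i ω * dM μ ℱ S i ω) ^ 2) ∂μ
      = ∫⁻ ω, ENNReal.ofReal (ϑ i ω ^ 2 * dM μ ℱ S i ω ^ 2) ∂μ :=
        lintegral_congr fun ω => by rw [mul_pow]
    _ ≤ ENNReal.ofReal B := hlint
    _ < ⊤ := ENNReal.ofReal_lt_top

lemma memL2_theta_dS (hL2 : ∀ k, MemLp (S k) 2 μ) {T : ℕ} {ϑ : ℕ → Ω → ℝ}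
    (hϑ : Admissible μ ℱ S T ϑ) {i : ℕ} (hi : i ∈ Finset.Icc 1 T) :
    MemLp (fun ω => ϑ i ω * dS S i ω) 2 μ := by
  have heq : (fun ω => ϑ i ω * dS S i ω)
      = fun ω => ϑ i ω * dM μ ℱ S i ω + ϑ i ω * dA μ ℱ S i ω := by
    funext ω
    simp only [dM]
    ring
  rw [heq]
  exact (memL2_theta_dM μ ℱ S hL2 hϑ hi).add (memL2_theta_dA μ ℱ S hϑ hi)

lemma memL2_wealth (hL2 : ∀ k, MemLp (S k) 2 μ) {T : ℕ} {ϑ : ℕ → Ω → ℝ}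
    (hϑ : Admissible μ ℱ S T ϑ) (x : ℝ) {l : ℕ} (hlT : l ≤ T) :
    MemLp (wealth S x ϑ l) 2 μ := by
  have h1 : MemLp (fun ω => ∑ i ∈ Finset.Icc 1 l, ϑ i ω * dS S i ω) 2 μ :=
    memLp_finset_sum (μ := μ) (p := 2) (Finset.Icc 1 l)
      (f := fun i ω => ϑ i ω * dS S i ω) (fun i hi => memL2_theta_dS μ ℱ S hL2 hϑ
        (Finset.mem_Icc.2 ⟨(Finset.mem_Icc.1 hi).1, le_trans (Finset.mem_Icc.1 hi).2 hlT⟩))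
  have h2 := (memLp_const (μ := μ) (p := 2) x).add h1
  exact h2.ae_eq (ae_of_all _ fun ω => rfl)

lemma memL2_tail (hL2 : ∀ k, MemLp (S k) 2 μ) {T : ℕ} {ϑ : ℕ → Ω → ℝ}
    (hϑ : Admissible μ ℱ S T ϑ) (l : ℕ) :
    MemLp (fun ω => ∑ i ∈ Finset.Icc (l + 1) T, ϑ i ω * dS S i ω) 2 μ :=
  memLp_finset_sum (μ := μ) (p := 2) (Finset.Icc (l + 1) T)
    (f := fun i ω => ϑ i ω * dS S i ω) (fun i hi => memL2_theta_dS μ ℱ S hL2 hϑ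
      (Finset.mem_Icc.2 ⟨le_trans (Nat.one_le_iff_ne_zero.2 (Nat.succ_ne_zero l))
        (Finset.mem_Icc.1 hi).1, (Finset.mem_Icc.1 hi).2⟩))

lemma sm_wealth {T : ℕ} {ϑ : ℕ → Ω → ℝ} (hϑ : Admissible μ ℱ S T ϑ)
    (hAdapted : StronglyAdapted ℱ S) (x : ℝ) {l : ℕ} (hlT : l ≤ T) :
    StronglyMeasurable[ℱ l] (wealth S x ϑ l) := by
  have hsum : StronglyMeasurable[ℱ l] (fun ω => ∑ i ∈ Finset.Icc 1 l, ϑ i ω * dS S i ω) := by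
    refine Finset.stronglyMeasurable_fun_sum (Finset.Icc 1 l) fun i hi => ?_
    obtain ⟨hi1, hi2⟩ := Finset.mem_Icc.1 hi
    have hθ : StronglyMeasurable[ℱ l] (ϑ i) :=
      (hϑ.1 i (Finset.mem_Icc.2 ⟨hi1, hi2.trans hlT⟩)).mono (ℱ.mono ((Nat.sub_le i 1).trans hi2))
    have hdSm : StronglyMeasurable[ℱ l] (dS S i) :=
      ((hAdapted i).mono (ℱ.mono hi2)).sub
        ((hAdapted (i - 1)).mono (ℱ.mono ((Nat.sub_le i 1).trans hi2)))
    exact hθ.mul hdSm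
  exact stronglyMeasurable_const.add hsum

end L2

/-- the recursion (total variance formula) for the conditional mean–variance
criterion: for `0 ≤ k ≤ l ≤ T`,
`U_k(ϑ) = E[U_l(ϑ) | F_k] - (γ/2) Var[E[∑_{i=l+1}^T ϑ_i ΔS_i | F_l] + V_l(x,ϑ) | F_k]` a.s. -/
theorem recursion_of_criterion
    {Ω : Type*} [m0 : MeasurableSpace Ω] (μ : Measure Ω) [IsProbabilityMeasure μ]
    (T : ℕ) (hT : 1 ≤ T) (ℱ : Filtration ℕ m0)
    (S : ℕ → Ω → ℝ) (hAdapted : StronglyAdapted ℱ S) (hL2 : ∀ k, MemLp (S k) 2 μ)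
    (x γ : ℝ) (hγ : 0 < γ)
    (ϑ : ℕ → Ω → ℝ) (hϑ : Admissible μ ℱ S T ϑ)
    (k l : ℕ) (hkl : k ≤ l) (hlT : l ≤ T) :
    ∀ᵐ ω ∂μ, U μ ℱ S T x γ ϑ k ω =
      (μ[U μ ℱ S T x γ ϑ l | ℱ k]) ω -
        γ / 2 * condVar μ (ℱ k)
          (fun ω' =>
            (μ[fun ω'' => ∑ i ∈ Finset.Icc (l + 1) T, ϑ i ω'' * dS S i ω'' | ℱ l]) ω'
              + wealth S x ϑ l ω') ω := by
  have hk0 : ℱ k ≤ m0 := ℱ.le k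
  have hl0 : ℱ l ≤ m0 := ℱ.le l
  have hkl' : ℱ k ≤ ℱ l := ℱ.mono hkl
  set X := wealth S x ϑ T with hX_def
  have hX : MemLp X 2 μ := memL2_wealth μ ℱ S hL2 hϑ x le_rfl
  have htail : MemLp (fun ω => ∑ i ∈ Finset.Icc (l + 1) T, ϑ i ω * dS S i ω) 2 μ :=
    memL2_tail μ ℱ S hL2 hϑ l
  have hWl : MemLp (wealth S x ϑ l) 2 μ := memL2_wealth μ ℱ S hL2 hϑ x hlT
  have hWlsm : StronglyMeasurable[ℱ l] (wealth S x ϑ l) := sm_wealth μ ℱ S hϑ hAdapted x hlT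
  -- split the wealth at time `T` as wealth at `l` plus the tail sum
  have hsplit : X = wealth S x ϑ l + fun ω => ∑ i ∈ Finset.Icc (l + 1) T, ϑ i ω * dS S i ω := by
    funext ω
    show x + ∑ i ∈ Finset.Icc 1 T, ϑ i ω * dS S i ω = _
    have key : ∑ i ∈ Finset.Icc 1 T, ϑ i ω * dS S i ω
        = ∑ i ∈ Finset.Icc 1 l, ϑ i ω * dS S i ω
          + ∑ i ∈ Finset.Icc (l + 1) T, ϑ i ω * dS S i ω := by
      have h := Finset.sum_Ioc_consecutive (fun i => ϑ i ω * dS S i ω) (Nat.zero_le l) hlT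
      rw [← Finset.Icc_add_one_left_eq_Ioc, ← Finset.Icc_add_one_left_eq_Ioc, ← Finset.Icc_add_one_left_eq_Ioc] at h
      simpa using h.symm
    simp only [Pi.add_apply, wealth]
    rw [key]
    ring
  -- identify the function inside the conditional variance with `E[X | F_l]`
  have hadd : μ[X|ℱ l] =ᵐ[μ] μ[wealth S x ϑ l|ℱ l]
      + μ[fun ω => ∑ i ∈ Finset.Icc (l + 1) T, ϑ i ω * dS S i ω|ℱ l] := by
    rw [hsplit]
    exact condExp_add (hWl.integrable one_le_two) (htail.integrable one_le_two) _
  have hcw : μ[wealth S x ϑ l|ℱ l] = wealth S x ϑ l :=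
    condExp_of_stronglyMeasurable hl0 hWlsm (hWl.integrable one_le_two)
  have hW : (fun ω' =>
        (μ[fun ω'' => ∑ i ∈ Finset.Icc (l + 1) T, ϑ i ω'' * dS S i ω''|ℱ l]) ω'
          + wealth S x ϑ l ω') =ᵐ[μ] μ[X|ℱ l] := by
    filter_upwards [hadd] with ω hω
    simp only [Pi.add_apply] at hω
    rw [hω, hcw]
    ring
  have hgl2 : MemLp (μ[X|ℱ l]) 2 μ := memL2_condexp hl0 hX
  -- conditional variance formulas
  have hVk := condVar_eq hk0 hX
  have hVl := condVar_eq hl0 hX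
  have hVgl := condVar_eq hk0 hgl2
  have hglk : μ[μ[X|ℱ l]|ℱ k] =ᵐ[μ] μ[X|ℱ k] := condExp_condExp_of_le hkl' hl0
  have hcvW : @condVar Ω m0 μ (ℱ k) (fun ω' =>
        (μ[fun ω'' => ∑ i ∈ Finset.Icc (l + 1) T, ϑ i ω'' * dS S i ω''|ℱ l]) ω'
          + wealth S x ϑ l ω') =ᵐ[μ] @condVar Ω m0 μ (ℱ k) (μ[X|ℱ l]) :=
    condVar_congr_ae hW
  -- conditional expectation of `U_l`
  have hcv_int : Integrable (@condVar Ω m0 μ (ℱ l) X) μ := by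
    unfold condVar; exact integrable_condExp
  have hUl_eq : U μ ℱ S T x γ ϑ l = μ[X|ℱ l] - (γ / 2) • @condVar Ω m0 μ (ℱ l) X := rfl
  have h1 : μ[U μ ℱ S T x γ ϑ l|ℱ k]
      =ᵐ[μ] μ[μ[X|ℱ l]|ℱ k] - μ[(γ / 2) • @condVar Ω m0 μ (ℱ l) X|ℱ k] := by
    rw [hUl_eq]
    exact condExp_sub integrable_condExp (hcv_int.smul _) _
  have h2 : μ[(γ / 2) • @condVar Ω m0 μ (ℱ l) X|ℱ k]
      =ᵐ[μ] (γ / 2) • μ[@condVar Ω m0 μ (ℱ l) X|ℱ k] := condExp_smul _ _ _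
  have h3 : μ[@condVar Ω m0 μ (ℱ l) X|ℱ k] =ᵐ[μ] fun ω =>
      (μ[fun ω' => X ω' ^ 2|ℱ k]) ω - (μ[fun ω' => ((μ[X|ℱ l]) ω') ^ 2|ℱ k]) ω := by
    have h3a : μ[@condVar Ω m0 μ (ℱ l) X|ℱ k]
        =ᵐ[μ] μ[fun ω => (μ[fun ω' => X ω' ^ 2|ℱ l]) ω - ((μ[X|ℱ l]) ω) ^ 2|ℱ k] :=
      condExp_congr_ae hVl
    have h3b : μ[fun ω => (μ[fun ω' => X ω' ^ 2|ℱ l]) ω - ((μ[X|ℱ l]) ω) ^ 2|ℱ k]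
        =ᵐ[μ] μ[μ[fun ω' => X ω' ^ 2|ℱ l]|ℱ k] - μ[fun ω => ((μ[X|ℱ l]) ω) ^ 2|ℱ k] := by
      have h := condExp_sub (μ := μ) (m := ℱ k) (f := μ[fun ω' => X ω' ^ 2|ℱ l])
        (g := fun ω => ((μ[X|ℱ l]) ω) ^ 2) integrable_condExp hgl2.integrable_sq
      exact h
    have h3c : μ[μ[fun ω' => X ω' ^ 2|ℱ l]|ℱ k] =ᵐ[μ] μ[fun ω' => X ω' ^ 2|ℱ k] :=
      condExp_condExp_of_le hkl' hl0
    filter_upwards [h3a, h3b, h3c] with ω e1 e2 e3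
    simp only [Pi.sub_apply] at e2 ⊢
    rw [e1, e2, e3]
  -- put everything together
  filter_upwards [h1, h2, h3, hVk, hVgl, hglk, hcvW] with ω e1 e2 e3 e4 e5 e6 e7
  have lhs : U μ ℱ S T x γ ϑ k ω
      = (μ[X|ℱ k]) ω - γ / 2 * @condVar Ω m0 μ (ℱ k) X ω := rfl
  simp only [Pi.sub_apply, Pi.smul_apply, smul_eq_mul] at e1 e2
  rw [lhs, e4, e1, e2, e3, e7, e5, e6]
  ring

end TCMV
end
end

section
/- For all admissible strategies ϑ, δ ∈ Θ and every k ∈ {1,…,T}, one has P-almost surely U_{k−1}(ϑ) − U_{k−1}(ϑ + δ1_{{k}}) = −δ_k ( E[ΔS_k | F_{k−1}] − γ Cov[ΔS_k, Σ_{i=k}^T ϑ_i ΔS_i | F_{k−1}] ) + (γ/2) δ_k² Var[ΔS_k | F_{k−1}]. -/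
open MeasureTheory Finset

noncomputable section

namespace TCMV

variable {Ω : Type*}

variable [m0 : MeasurableSpace Ω]

section AuxLemmas

variable {α : Type*}

theorem memℒp_two_integrable_mul {mα : MeasurableSpace α} {μ : Measure α}
    {f g : α → ℝ} (hf : MemLp f 2 μ) (hg : MemLp g 2 μ) :
    Integrable (fun ω => f ω * g ω) μ := by
  have h := hg.smul (φ := f) hf (r := 1)
  rw [memLp_one_iff_integrable] at h
  exact h.congr (Filter.Eventually.of_forall fun ω => by simp [smul_eq_mul])

theorem memℒp_two_condexp {mA mB : MeasurableSpace α} {μ : Measure α}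
    [IsFiniteMeasure μ] (hm : mA ≤ mB) {f : α → ℝ} (hf : MemLp f 2 μ) :
    MemLp (μ[f|mA]) 2 μ := by
  have hfi : Integrable f μ := hf.integrable one_le_two
  set F : Lp ℝ 2 μ := hf.toLp f with hF
  have hFf : (F : α → ℝ) =ᵐ[μ] f := hf.coeFn_toLp
  have h : ((condExpL2 ℝ ℝ hm F : lpMeas ℝ ℝ mA 2 μ) : α → ℝ) =ᵐ[μ] μ[f|mA] := by
    refine ae_eq_condExp_of_forall_setIntegral_eq hm hfi (fun s _ _ => ?_) (fun s hs hμs => ?_) ?_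
    · exact ((Lp.memLp _).integrable one_le_two).integrableOn
    · rw [integral_condExpL2_eq hm F hs hμs.ne]
      exact setIntegral_congr_ae (hm s hs) (hFf.mono fun x hx _ => hx)
    · exact aestronglyMeasurable_condExpL2 hm F
  exact (Lp.memLp _).ae_eq h

theorem integrable_mul_of_integrable_mul_condexp {mA mB : MeasurableSpace α}
    {μ : Measure α} [IsFiniteMeasure μ] (hm : mA ≤ mB) {g h : α → ℝ}
    (hgm : StronglyMeasurable[mA] g) (hg0 : 0 ≤ g) (hh : Integrable h μ) (hh0 : 0 ≤ h)
    (hint : Integrable (fun ω => g ω * (μ[h|mA]) ω) μ) :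
    Integrable (fun ω => g ω * h ω) μ := by
  have hgm0 : StronglyMeasurable[mB] g := hgm.mono hm
  set G : ℕ → α → ℝ := fun n ω => min (g ω) n with hG
  have hGm : ∀ n, StronglyMeasurable[mA] (G n) := fun n =>
    (hgm.measurable.min measurable_const).stronglyMeasurable
  have hG0 : ∀ n ω, 0 ≤ G n ω := fun n ω => le_min (hg0 ω) (n.cast_nonneg)
  have hGle : ∀ n ω, G n ω ≤ g ω := fun n ω => min_le_left _ _
  have hGint : ∀ n, Integrable (fun ω => G n ω * h ω) μ := by
    intro n
    refine hh.bdd_mul ((hGm n).mono hm).aestronglyMeasurable (c := n) (Filter.Eventually.of_forall fun ω => ?_)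
    rw [Real.norm_eq_abs, abs_of_nonneg (hG0 n ω)]
    exact min_le_right _ _
  have hpull : ∀ n, (μ[fun ω => G n ω * h ω|mA]) =ᵐ[μ] fun ω => G n ω * (μ[h|mA]) ω := fun n =>
    condExp_mul_of_stronglyMeasurable_left (hGm n) (hGint n) hh
  have hEh0 : 0 ≤ᵐ[μ] μ[h|mA] := condExp_nonneg (Filter.Eventually.of_forall hh0)
  have hIbound : ∀ n, ∫ ω, G n ω * h ω ∂μ ≤ ∫ ω, g ω * (μ[h|mA]) ω ∂μ := by
    intro n
    have h1 : ∫ ω, G n ω * h ω ∂μ = ∫ ω, G n ω * (μ[h|mA]) ω ∂μ := by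
      calc ∫ ω, G n ω * h ω ∂μ = ∫ ω, (μ[fun ω => G n ω * h ω|mA]) ω ∂μ :=
            (integral_condExp hm).symm
        _ = ∫ ω, G n ω * (μ[h|mA]) ω ∂μ := integral_congr_ae (hpull n)
    rw [h1]
    refine integral_mono_ae ?_ hint ?_
    · exact hint.mono' (((hGm n).mono hm).aestronglyMeasurable.mul
        (stronglyMeasurable_condExp.mono hm).aestronglyMeasurable)
        (hEh0.mono fun ω hω => by
          rw [Real.norm_eq_abs, abs_of_nonneg (mul_nonneg (hG0 n ω) hω)]
          exact mul_le_mul_of_nonneg_right (hGle n ω) hω)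
    · exact hEh0.mono fun ω hω => mul_le_mul_of_nonneg_right (hGle n ω) hω
  have hmeas : AEStronglyMeasurable (fun ω => g ω * h ω) μ :=
    hgm0.aestronglyMeasurable.mul hh.aestronglyMeasurable
  refine ⟨hmeas, ?_⟩
  rw [hasFiniteIntegral_iff_ofReal
    (Filter.Eventually.of_forall fun ω => mul_nonneg (hg0 ω) (hh0 ω))]
  have key : (∫⁻ ω, ENNReal.ofReal (g ω * h ω) ∂μ)
      = ⨆ n, ∫⁻ ω, ENNReal.ofReal (G n ω * h ω) ∂μ := by
    rw [← lintegral_iSup']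
    · refine lintegral_congr fun ω => ?_
      have hGg : G (⌈g ω⌉₊) ω = g ω := min_eq_left (Nat.le_ceil _)
      refine le_antisymm ?_ (iSup_le fun n => ENNReal.ofReal_le_ofReal
          (mul_le_mul_of_nonneg_right (hGle n ω) (hh0 ω)))
      exact le_iSup_of_le ⌈g ω⌉₊ (le_of_eq (by rw [hGg]))
    · intro n
      exact ENNReal.measurable_ofReal.comp_aemeasurable
        ((((hGm n).mono hm).aestronglyMeasurable.aemeasurable).mul
          hh.aestronglyMeasurable.aemeasurable)
    · refine Filter.Eventually.of_forall fun ω a b hab => ?_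
      exact ENNReal.ofReal_le_ofReal (mul_le_mul_of_nonneg_right
        (min_le_min le_rfl (Nat.cast_le.2 hab)) (hh0 ω))
  rw [key]
  refine (iSup_le fun n => ?_).trans_lt
    (@ENNReal.ofReal_lt_top (∫ ω, g ω * (μ[h|mA]) ω ∂μ))
  rw [← ofReal_integral_eq_lintegral_ofReal (hGint n)
    (Filter.Eventually.of_forall fun ω => mul_nonneg (hG0 n ω) (hh0 ω))]
  exact ENNReal.ofReal_le_ofReal (hIbound n)

theorem condexp_sq_sub_sq {mA mB : MeasurableSpace α} (hm : mA ≤ mB) {μ : Measure α}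
    [IsProbabilityMeasure μ] {X : α → ℝ} (hX : MemLp X 2 μ) :
    (μ[fun ω => (X ω - (μ[X|mA]) ω) ^ 2|mA])
      =ᵐ[μ] fun ω => (μ[fun ω' => X ω' ^ 2|mA]) ω - ((μ[X|mA]) ω) ^ 2 := by
  set e := μ[X|mA] with he
  have hem : StronglyMeasurable[mA] e := stronglyMeasurable_condExp
  have he2 : MemLp e 2 μ := memℒp_two_condexp hm hX
  have hXi : Integrable X μ := hX.integrable one_le_two
  have hX2 : Integrable (fun ω => X ω ^ 2) μ := hX.integrable_sq
  have hXe : Integrable (fun ω => X ω * e ω) μ := memℒp_two_integrable_mul hX he2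
  have hee : Integrable (fun ω => e ω * e ω) μ := memℒp_two_integrable_mul he2 he2
  have h2Xe : Integrable (fun ω => (2 * e ω) * X ω) μ :=
    (hXe.const_mul 2).congr (Filter.Eventually.of_forall fun ω => by ring)
  have hsub : Integrable (fun ω => (2 * e ω) * X ω - e ω * e ω) μ := h2Xe.sub hee
  have hexp : (fun ω => (X ω - e ω) ^ 2)
      = fun ω => X ω ^ 2 - ((2 * e ω) * X ω - e ω * e ω) := by
    funext ω; ring
  have h1 : (μ[fun ω => (X ω - e ω) ^ 2|mA])
      =ᵐ[μ] μ[fun ω => X ω ^ 2|mA] - μ[fun ω => (2 * e ω) * X ω - e ω * e ω|mA] := by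
    rw [hexp]; exact condExp_sub hX2 hsub mA
  have h2 : (μ[fun ω => (2 * e ω) * X ω - e ω * e ω|mA])
      =ᵐ[μ] μ[fun ω => (2 * e ω) * X ω|mA] - μ[fun ω => e ω * e ω|mA] :=
    condExp_sub h2Xe hee mA
  have h3 : (μ[fun ω => (2 * e ω) * X ω|mA]) =ᵐ[μ] fun ω => (2 * e ω) * (μ[X|mA]) ω :=
    condExp_mul_of_stronglyMeasurable_left (stronglyMeasurable_const.mul hem) h2Xe hXi
  have h4 : (μ[fun ω => e ω * e ω|mA]) = fun ω => e ω * e ω :=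
    condExp_of_stronglyMeasurable hm (hem.mul hem) hee
  filter_upwards [h1, h2, h3] with ω h1ω h2ω h3ω
  simp only [Pi.sub_apply] at h1ω h2ω
  rw [h1ω, h2ω, h3ω, h4]
  rw [← he]
  ring

end AuxLemmas

theorem condVar_ae_eq' {μ : Measure Ω} [IsProbabilityMeasure μ]
    {mA : MeasurableSpace Ω} (hm : mA ≤ m0) {X : Ω → ℝ} (hX : MemLp X 2 μ) :
    @condVar Ω m0 μ mA X
      =ᵐ[μ] fun ω => (μ[fun ω' => X ω' ^ 2|mA]) ω - ((μ[X|mA]) ω) ^ 2 := by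
  unfold condVar
  exact condexp_sq_sub_sq (μ := μ) hm hX

theorem term_memℒp (μ : Measure Ω) [IsProbabilityMeasure μ] (ℱ : Filtration ℕ m0)
    (S : ℕ → Ω → ℝ) (T : ℕ) (hAdapted : StronglyAdapted ℱ S) (hL2 : ∀ k, MemLp (S k) 2 μ)
    {ϑ : ℕ → Ω → ℝ} (hϑ : Admissible μ ℱ S T ϑ) {i : ℕ} (hi : i ∈ Finset.Icc 1 T) :
    MemLp (fun ω => ϑ i ω * dS S i ω) 2 μ := by
  have hdS2 : MemLp (dS S i) 2 μ := (hL2 i).sub (hL2 (i - 1))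
  have hdA2 : MemLp (dA μ ℱ S i) 2 μ := memℒp_two_condexp (ℱ.le (i - 1)) hdS2
  have hdM2 : MemLp (dM μ ℱ S i) 2 μ := hdS2.sub hdA2
  have hθm : StronglyMeasurable[ℱ (i - 1)] (ϑ i) := hϑ.1 i hi
  have hθm0 : AEStronglyMeasurable (ϑ i) μ := (hθm.mono (ℱ.le _)).aestronglyMeasurable
  have hdAm : AEStronglyMeasurable (dA μ ℱ S i) μ :=
    (stronglyMeasurable_condExp.mono (ℱ.le _)).aestronglyMeasurable
  -- the drift part is in L²
  have hFsum : MemLp (fun ω => ∑ j ∈ Finset.Icc 1 T, |ϑ j ω * dA μ ℱ S j ω|) 2 μ := by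
    refine (memLp_two_iff_integrable_sq ?_).2 hϑ.2.2
    refine Finset.aestronglyMeasurable_fun_sum _ fun j hj => ?_
    have h1 : AEStronglyMeasurable (fun ω => ϑ j ω * dA μ ℱ S j ω) μ :=
      ((hϑ.1 j hj).mono (ℱ.le _)).aestronglyMeasurable.mul
        ((stronglyMeasurable_condExp.mono (ℱ.le _)).aestronglyMeasurable)
    exact h1.norm.congr (Filter.Eventually.of_forall fun ω => (Real.norm_eq_abs _))
  have hθA : MemLp (fun ω => ϑ i ω * dA μ ℱ S i ω) 2 μ := by
    refine hFsum.of_le (hθm0.mul hdAm) (Filter.Eventually.of_forall fun ω => ?_)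
    have hb : |ϑ i ω * dA μ ℱ S i ω| ≤ ∑ j ∈ Finset.Icc 1 T, |ϑ j ω * dA μ ℱ S j ω| :=
      Finset.single_le_sum (f := fun j => |ϑ j ω * dA μ ℱ S j ω|)
        (fun j _ => abs_nonneg _) hi
    rw [Real.norm_eq_abs, Real.norm_eq_abs]
    exact hb.trans (le_abs_self _)
  -- the martingale part is in L²
  have hθ2m : StronglyMeasurable[ℱ (i - 1)] (fun ω => ϑ i ω ^ 2) := by
    simpa [pow_two, Pi.mul_def] using hθm.mul hθm
  have hsq : Integrable (fun ω => ϑ i ω ^ 2 * dM μ ℱ S i ω ^ 2) μ := by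
    refine integrable_mul_of_integrable_mul_condexp (ℱ.le (i - 1)) hθ2m
      (fun ω => sq_nonneg _) hdM2.integrable_sq (fun ω => sq_nonneg _) ?_
    have hpos : ∀ᵐ ω ∂μ, ∀ j ∈ Finset.Icc 1 T,
        0 ≤ (μ[fun ω' => dM μ ℱ S j ω' ^ 2|ℱ (j - 1)]) ω := by
      rw [Filter.eventually_all_finset]
      exact fun j _ => condExp_nonneg (Filter.Eventually.of_forall fun ω => sq_nonneg _)
    refine (hϑ.2.1).mono' ?_ ?_
    · exact (hθ2m.mono (ℱ.le _)).aestronglyMeasurable.mul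
        (stronglyMeasurable_condExp.mono (ℱ.le _)).aestronglyMeasurable
    · filter_upwards [hpos] with ω hω
      rw [Real.norm_eq_abs, abs_of_nonneg (mul_nonneg (sq_nonneg _) (hω i hi))]
      exact Finset.single_le_sum
        (f := fun j => ϑ j ω ^ 2 * (μ[fun ω' => dM μ ℱ S j ω' ^ 2|ℱ (j - 1)]) ω)
        (fun j hj => mul_nonneg (sq_nonneg _) (hω j hj)) hi
  have hθM : MemLp (fun ω => ϑ i ω * dM μ ℱ S i ω) 2 μ := by
    refine (memLp_two_iff_integrable_sq (hθm0.mul hdM2.aestronglyMeasurable)).2 ?_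
    exact hsq.congr (Filter.Eventually.of_forall fun ω => (mul_pow _ _ 2).symm)
  have hfe : (fun ω => ϑ i ω * dS S i ω)
      = fun ω => ϑ i ω * dM μ ℱ S i ω + ϑ i ω * dA μ ℱ S i ω := by
    funext ω; simp only [dM]; ring
  rw [hfe]
  exact hθM.add hθA

/-- the effect of a local perturbation at time `k` on the conditional
mean–variance criterion at time `k-1`. -/
theorem local_perturbation_formula
    {Ω : Type*} [m0 : MeasurableSpace Ω] (μ : Measure Ω) [IsProbabilityMeasure μ]
    (T : ℕ) (hT : 1 ≤ T) (ℱ : Filtration ℕ m0)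
    (S : ℕ → Ω → ℝ) (hAdapted : StronglyAdapted ℱ S) (hL2 : ∀ k, MemLp (S k) 2 μ)
    (x γ : ℝ) (hγ : 0 < γ)
    (ϑ δ : ℕ → Ω → ℝ) (hϑ : Admissible μ ℱ S T ϑ) (hδ : Admissible μ ℱ S T δ)
    (k : ℕ) (hk : k ∈ Finset.Icc 1 T) :
    ∀ᵐ ω ∂μ,
      U μ ℱ S T x γ ϑ (k - 1) ω - U μ ℱ S T x γ (perturb ϑ δ k) (k - 1) ω =
        -(δ k ω) * ((μ[dS S k | ℱ (k - 1)]) ω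
            - γ * condCov μ (ℱ (k - 1)) (dS S k)
                (fun ω' => ∑ i ∈ Finset.Icc k T, ϑ i ω' * dS S i ω') ω)
          + γ / 2 * (δ k ω) ^ 2 * condVar μ (ℱ (k - 1)) (dS S k) ω := by
  obtain ⟨hk1, hkT⟩ := Finset.mem_Icc.mp hk
  have hterm : ∀ i ∈ Finset.Icc 1 T, MemLp (fun ω => ϑ i ω * dS S i ω) 2 μ :=
    fun i hi => term_memℒp μ ℱ S T hAdapted hL2 hϑ hi
  simp only [U, condCov]
  set mm := ℱ (k - 1) with hmmdef
  have hm : mm ≤ m0 := ℱ.le _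
  set Y : Ω → ℝ := fun ω' => ∑ i ∈ Finset.Icc k T, ϑ i ω' * dS S i ω' with hYdef
  set c : Ω → ℝ := fun ω => x + ∑ i ∈ Finset.Icc 1 (k - 1), ϑ i ω * dS S i ω with hcdef
  set W : Ω → ℝ := fun ω => δ k ω * dS S k ω with hWdef
  set V : Ω → ℝ := wealth S x ϑ T with hVdef
  -- basic Lᵖ facts
  have hdSk2 : MemLp (dS S k) 2 μ := (hL2 k).sub (hL2 (k - 1))
  have hW2 : MemLp W 2 μ := term_memℒp (m0 := m0) μ ℱ S T hAdapted hL2 hδ hk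
  have hsub1 : ∀ i ∈ Finset.Icc 1 (k - 1), i ∈ Finset.Icc 1 T := by
    intro i hi; simp only [Finset.mem_Icc] at *; omega
  have hsub2 : ∀ i ∈ Finset.Icc k T, i ∈ Finset.Icc 1 T := by
    intro i hi; simp only [Finset.mem_Icc] at *; omega
  have hY2 : MemLp Y 2 μ := memLp_finsetSum _ fun i hi => hterm i (hsub2 i hi)
  have hc2 : MemLp c 2 μ :=
    (memLp_const x).add (memLp_finsetSum _ fun i hi => hterm i (hsub1 i hi))
  have hV2 : MemLp V 2 μ :=
    (memLp_const x).add (memLp_finsetSum _ fun i hi => hterm i hi)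
  have hYi : Integrable Y μ := hY2.integrable one_le_two
  have hci : Integrable c μ := hc2.integrable one_le_two
  have hVi : Integrable V μ := hV2.integrable one_le_two
  have hWi : Integrable W μ := hW2.integrable one_le_two
  have hdSki : Integrable (dS S k) μ := hdSk2.integrable one_le_two
  have hYW_int : Integrable (fun ω => Y ω * W ω) μ := memℒp_two_integrable_mul hY2 hW2
  have hcW_int : Integrable (fun ω => c ω * W ω) μ := memℒp_two_integrable_mul hc2 hW2
  have hdSY_int : Integrable (fun ω => dS S k ω * Y ω) μ := memℒp_two_integrable_mul hdSk2 hY2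
  have hVW_int : Integrable (fun ω => V ω * W ω) μ := memℒp_two_integrable_mul hV2 hW2
  -- measurability
  have hδm : StronglyMeasurable[mm] (δ k) := hδ.1 k hk
  have hδ2m : StronglyMeasurable[mm] (fun ω => δ k ω ^ 2) := by
    simpa [pow_two, Pi.mul_def] using hδm.mul hδm
  have hcm : StronglyMeasurable[mm] c := by
    refine StronglyMeasurable.add stronglyMeasurable_const ?_
    refine Finset.stronglyMeasurable_fun_sum _ fun i hi => ?_
    obtain ⟨hi1, hi2⟩ := Finset.mem_Icc.mp hi
    have h1 : StronglyMeasurable[ℱ (i - 1)] (ϑ i) :=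
      hϑ.1 i (Finset.mem_Icc.mpr ⟨hi1, by omega⟩)
    have h2 : StronglyMeasurable[ℱ i] (dS S i) :=
      (hAdapted i).sub ((hAdapted (i - 1)).mono (ℱ.mono (Nat.sub_le i 1)))
    exact (h1.mono (ℱ.mono (by omega : i - 1 ≤ k - 1))).mul (h2.mono (ℱ.mono hi2))
  -- decompositions of the wealth
  have hunion : Finset.Icc 1 (k - 1) ∪ Finset.Icc k T = Finset.Icc 1 T := by
    ext j; simp only [Finset.mem_union, Finset.mem_Icc]; omega
  have hdisj : Disjoint (Finset.Icc 1 (k - 1)) (Finset.Icc k T) := by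
    rw [Finset.disjoint_left]; intro j hj hj'
    simp only [Finset.mem_Icc] at hj hj'; omega
  have hVsplit : V = fun ω => c ω + Y ω := by
    funext ω
    simp only [hVdef, hcdef, hYdef, wealth]
    rw [← hunion, Finset.sum_union hdisj]
    ring
  have hVW : wealth S x (perturb ϑ δ k) T = fun ω => V ω + W ω := by
    funext ω
    simp only [hVdef, hWdef, wealth, perturb]
    rw [show (∑ i ∈ Finset.Icc 1 T,
          (if i = k then (fun ω => ϑ k ω + δ k ω) else ϑ i) ω * dS S i ω)
        = ∑ i ∈ Finset.Icc 1 T,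
          (ϑ i ω * dS S i ω + if i = k then δ k ω * dS S k ω else 0) from
      Finset.sum_congr rfl fun i hi => by
        by_cases h : i = k
        · subst h; rw [if_pos rfl, if_pos rfl]; beta_reduce; ring
        · simp [h]]
    rw [Finset.sum_add_distrib, Finset.sum_ite_eq' (Finset.Icc 1 T) k
      (fun _ => δ k ω * dS S k ω), if_pos hk]
    ring
  rw [hVW]
  -- conditional expectation computations
  have hcE : μ[c|mm] = c := condExp_of_stronglyMeasurable hm hcm hci
  have A1 : μ[V|mm] =ᵐ[μ] fun ω => c ω + (μ[Y|mm]) ω := by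
    have h0 : μ[fun ω => c ω + Y ω|mm] =ᵐ[μ] μ[c|mm] + μ[Y|mm] := condExp_add hci hYi mm
    rw [hVsplit]
    filter_upwards [h0] with ω h0ω
    rw [h0ω, Pi.add_apply, hcE]
  have A2 : μ[fun ω' => V ω' + W ω'|mm] =ᵐ[μ] fun ω => (μ[V|mm]) ω + (μ[W|mm]) ω :=
    condExp_add hVi hWi mm
  have A3 : μ[W|mm] =ᵐ[μ] fun ω => δ k ω * (μ[dS S k|mm]) ω :=
    condExp_mul_of_stronglyMeasurable_left hδm hWi hdSki
  have hQint : Integrable (fun ω => 2 * (V ω * W ω) + W ω ^ 2) μ :=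
    (hVW_int.const_mul 2).add hW2.integrable_sq
  have A6 : μ[fun ω' => (V ω' + W ω') ^ 2|mm]
      =ᵐ[μ] fun ω => (μ[fun ω' => V ω' ^ 2|mm]) ω
        + (μ[fun ω' => 2 * (V ω' * W ω') + W ω' ^ 2|mm]) ω := by
    have hfe : (fun ω' => (V ω' + W ω') ^ 2)
        = fun ω' => V ω' ^ 2 + (2 * (V ω' * W ω') + W ω' ^ 2) := by funext ω'; ring
    rw [hfe]
    exact condExp_add hV2.integrable_sq hQint mm
  have A7 : μ[fun ω' => 2 * (V ω' * W ω') + W ω' ^ 2|mm]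
      =ᵐ[μ] fun ω => (μ[fun ω' => 2 * (V ω' * W ω')|mm]) ω
        + (μ[fun ω' => W ω' ^ 2|mm]) ω :=
    condExp_add (hVW_int.const_mul 2) hW2.integrable_sq mm
  have hint1 : Integrable (fun ω => (2 * δ k ω * c ω) * dS S k ω) μ :=
    (hcW_int.const_mul 2).congr
      (Filter.Eventually.of_forall fun ω => by simp only [hWdef]; ring)
  have hint2 : Integrable
      (fun ω => (2 * δ k ω) * (dS S k ω * ∑ i ∈ Finset.Icc k T, ϑ i ω * dS S i ω)) μ :=
    (hYW_int.const_mul 2).congr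
      (Filter.Eventually.of_forall fun ω => by simp only [hWdef, hYdef]; ring)
  have p1 : μ[fun ω' => (2 * δ k ω' * c ω') * dS S k ω'|mm]
      =ᵐ[μ] fun ω => (2 * δ k ω * c ω) * (μ[dS S k|mm]) ω :=
    condExp_mul_of_stronglyMeasurable_left ((stronglyMeasurable_const.mul hδm).mul hcm) hint1 hdSki
  have p2 : μ[fun ω' => (2 * δ k ω')
        * (dS S k ω' * ∑ i ∈ Finset.Icc k T, ϑ i ω' * dS S i ω')|mm]
      =ᵐ[μ] fun ω => (2 * δ k ω)
        * (μ[fun ω' => dS S k ω' * ∑ i ∈ Finset.Icc k T, ϑ i ω' * dS S i ω'|mm]) ω :=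
    condExp_mul_of_stronglyMeasurable_left (stronglyMeasurable_const.mul hδm) hint2 hdSY_int
  have A8 : μ[fun ω' => 2 * (V ω' * W ω')|mm]
      =ᵐ[μ] fun ω => (2 * δ k ω * c ω) * (μ[dS S k|mm]) ω
        + (2 * δ k ω)
          * (μ[fun ω' => dS S k ω' * ∑ i ∈ Finset.Icc k T, ϑ i ω' * dS S i ω'|mm]) ω := by
    have hfe : (fun ω' => 2 * (V ω' * W ω'))
        = fun ω' => (2 * δ k ω' * c ω') * dS S k ω'
          + (2 * δ k ω') * (dS S k ω' * ∑ i ∈ Finset.Icc k T, ϑ i ω' * dS S i ω') := by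
      funext ω'
      simp only [hVsplit, hWdef, hYdef]
      ring
    rw [hfe]
    have hadd := condExp_add (m := mm) hint1 hint2
    filter_upwards [hadd, p1, p2] with ω h1 h2 h3
    have h1' : (μ[fun ω' => (2 * δ k ω' * c ω') * dS S k ω'
          + (2 * δ k ω') * (dS S k ω' * ∑ i ∈ Finset.Icc k T, ϑ i ω' * dS S i ω')|mm]) ω
        = (μ[fun ω' => (2 * δ k ω' * c ω') * dS S k ω'|mm]) ω
          + (μ[fun ω' => (2 * δ k ω')
              * (dS S k ω' * ∑ i ∈ Finset.Icc k T, ϑ i ω' * dS S i ω')|mm]) ω := h1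
    rw [h1', h2, h3]
  have hint9 : Integrable (fun ω => δ k ω ^ 2 * dS S k ω ^ 2) μ :=
    hW2.integrable_sq.congr
      (Filter.Eventually.of_forall fun ω => by simp only [hWdef]; ring)
  have A9 : μ[fun ω' => W ω' ^ 2|mm]
      =ᵐ[μ] fun ω => δ k ω ^ 2 * (μ[fun ω' => dS S k ω' ^ 2|mm]) ω := by
    have hfe : (fun ω' => W ω' ^ 2) = fun ω' => δ k ω' ^ 2 * dS S k ω' ^ 2 := by
      funext ω'; simp only [hWdef]; ring
    rw [hfe]
    exact condExp_mul_of_stronglyMeasurable_left hδ2m hint9 hdSk2.integrable_sq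
  have A4 : @condVar Ω m0 μ mm V
      =ᵐ[μ] fun ω => (μ[fun ω' => V ω' ^ 2|mm]) ω - ((μ[V|mm]) ω) ^ 2 :=
    condVar_ae_eq' (m0 := m0) hm hV2
  have A5 : @condVar Ω m0 μ mm (fun ω' => V ω' + W ω')
      =ᵐ[μ] fun ω => (μ[fun ω' => (V ω' + W ω') ^ 2|mm]) ω
        - ((μ[fun ω' => V ω' + W ω'|mm]) ω) ^ 2 :=
    condVar_ae_eq' (m0 := m0) hm (hV2.add hW2)
  have A10 : @condVar Ω m0 μ mm (dS S k)
      =ᵐ[μ] fun ω => (μ[fun ω' => dS S k ω' ^ 2|mm]) ω - ((μ[dS S k|mm]) ω) ^ 2 :=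
    condVar_ae_eq' (m0 := m0) hm hdSk2
  filter_upwards [A1, A2, A3, A4, A5, A6, A7, A8, A9, A10] with ω g1 g2 g3 g4 g5 g6 g7 g8 g9 g10
  rw [g4, g5, g6, g7, g8, g9, g10, g2, g3, g1]
  ring


end TCMV
end
end

section
/- For every admissible strategy ϑ ∈ Θ and every k ∈ {1,…,T}, one has P-almost surely Cov[ΔS_k, Σ_{i=k+1}^T ϑ_i ΔS_i | F_{k−1}] = Cov[ΔM_k, Σ_{i=k+1}^T ϑ_i ΔA_i | F_{k−1}]; that is, in the conditional covariance of the stock price increment with the future gains, the price increment may be replaced by its martingale part and the future price increments by their predictable (drift) parts. -/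
open MeasureTheory Finset

noncomputable section

namespace TCMV

variable {Ω : Type*}

variable [m0 : MeasurableSpace Ω]

section AuxLemmas


lemma sm_min' {Ω' : Type*} {m : MeasurableSpace Ω'} {f : Ω' → ℝ} (hf : StronglyMeasurable[m] f)
    (c : ℝ) : StronglyMeasurable[m] fun ω => min (f ω) c :=
  hf.inf stronglyMeasurable_const

lemma memℒp_two_condexp' {Ω' : Type*} {m m0' : MeasurableSpace Ω'} {μ : Measure Ω'}
    [IsProbabilityMeasure μ] (hm : m ≤ m0')
    {f : Ω' → ℝ} (hf : MemLp f 2 μ) : MemLp (μ[f|m]) 2 μ := by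
  have heq : (condExpL2 ℝ ℝ hm (hf.toLp f) : Ω' → ℝ) =ᵐ[μ] μ[f|m] := by
    refine ae_eq_condExp_of_forall_setIntegral_eq hm (hf.integrable one_le_two)
      (fun s _ _ => (integrable_condExpL2_of_isFiniteMeasure (E := ℝ) (𝕜 := ℝ) hm
        (f := hf.toLp f)).integrableOn)
      (fun s hs hμs => ?_) (aestronglyMeasurable_condExpL2 hm (hf.toLp f))
    rw [integral_condExpL2_eq hm (hf.toLp f) hs hμs.ne]
    exact setIntegral_congr_ae (hm s hs) ((hf.coeFn_toLp).mono fun x hx _ => hx)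
  exact (Lp.memLp _).ae_eq heq

lemma integrable_mul_L2' {Ω' : Type*} {m0' : MeasurableSpace Ω'} {μ : Measure Ω'}
    {f g : Ω' → ℝ} (hf : MemLp f 2 μ) (hg : MemLp g 2 μ) :
    Integrable (fun ω => f ω * g ω) μ := by
  have h : MemLp (f • g) 1 μ :=
    hg.smul hf
  rw [← memLp_one_iff_integrable]
  exact h

lemma memℒp_two_mul_of_integrable_sq_condexp' {Ω' : Type*} {m m0' : MeasurableSpace Ω'}
    {μ : Measure Ω'} [IsProbabilityMeasure μ] (hm : m ≤ m0')
    {f g : Ω' → ℝ} (hf : StronglyMeasurable[m] f) (hg : MemLp g 2 μ)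
    (hint : Integrable (fun ω => f ω ^ 2 * (μ[fun ω' => g ω' ^ 2 | m]) ω) μ) :
    MemLp (fun ω => f ω * g ω) 2 μ := by
  have hgsq : Integrable (fun ω => g ω ^ 2) μ := (memLp_two_iff_integrable_sq hg.1).mp hg
  set h : Ω' → ℝ := μ[fun ω' => g ω' ^ 2|m] with hh
  have hh_nonneg : 0 ≤ᵐ[μ] h := condExp_nonneg (ae_of_all μ fun ω => sq_nonneg _)
  have hfsq : StronglyMeasurable[m] (fun ω => f ω ^ 2) := by
    exact hf.pow 2
  set F : ℕ → Ω' → ℝ := fun n ω => min (f ω ^ 2) n with hF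
  have hF_nonneg : ∀ n ω, 0 ≤ F n ω := fun n ω => le_min (sq_nonneg _) (Nat.cast_nonneg n)
  have hF_le : ∀ n ω, F n ω ≤ f ω ^ 2 := fun n ω => min_le_left _ _
  have hF_meas : ∀ n, StronglyMeasurable[m] (F n) := fun n => sm_min' hfsq _
  have hFg_int : ∀ n, Integrable (fun ω => F n ω * g ω ^ 2) μ := by
    intro n
    refine (hgsq.const_mul (n : ℝ)).mono'
      ((((hF_meas n).mono hm).aestronglyMeasurable).mul hgsq.1) ?_
    refine ae_of_all μ fun ω => ?_
    rw [Real.norm_eq_abs, abs_mul, abs_of_nonneg (hF_nonneg n ω), abs_of_nonneg (sq_nonneg _)]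
    exact mul_le_mul_of_nonneg_right (min_le_right _ _) (sq_nonneg _)
  have h_pull : ∀ n, μ[fun ω => F n ω * g ω ^ 2|m] =ᵐ[μ] fun ω => F n ω * h ω := fun n =>
    condExp_mul_of_stronglyMeasurable_left (hF_meas n) (hFg_int n) hgsq
  have hFh_int : ∀ n, Integrable (fun ω => F n ω * h ω) μ := by
    intro n
    refine hint.mono' ((((hF_meas n).mono hm).aestronglyMeasurable).mul
      (stronglyMeasurable_condExp.mono hm).aestronglyMeasurable) ?_
    filter_upwards [hh_nonneg] with ω hω
    rw [Real.norm_eq_abs, abs_mul, abs_of_nonneg (hF_nonneg n ω), abs_of_nonneg hω]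
    exact mul_le_mul_of_nonneg_right (hF_le n ω) hω
  have key : ∀ n, ∫ ω, F n ω * g ω ^ 2 ∂μ ≤ ∫ ω, f ω ^ 2 * h ω ∂μ := by
    intro n
    have h1 : ∫ ω, F n ω * g ω ^ 2 ∂μ = ∫ ω, F n ω * h ω ∂μ := by
      rw [← integral_condExp hm (f := fun ω => F n ω * g ω ^ 2)]
      exact integral_congr_ae (h_pull n)
    rw [h1]
    refine integral_mono_ae (hFh_int n) hint ?_
    filter_upwards [hh_nonneg] with ω hω
    exact mul_le_mul_of_nonneg_right (hF_le n ω) hω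
  have hsup : ∀ ω, (⨆ n, ENNReal.ofReal (F n ω * g ω ^ 2)) = ENNReal.ofReal ((f ω * g ω) ^ 2) := by
    intro ω
    rw [mul_pow]
    refine le_antisymm (iSup_le fun n => ENNReal.ofReal_le_ofReal
      (mul_le_mul_of_nonneg_right (hF_le n ω) (sq_nonneg _))) ?_
    refine le_iSup_of_le ⌈f ω ^ 2⌉₊ (le_of_eq ?_)
    have : F ⌈f ω ^ 2⌉₊ ω = f ω ^ 2 := min_eq_left (Nat.le_ceil _)
    rw [this]
  have hlint : ∫⁻ ω, ENNReal.ofReal ((f ω * g ω) ^ 2) ∂μ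
      ≤ ENNReal.ofReal (∫ ω, f ω ^ 2 * h ω ∂μ) := by
    have hmono : ∀ᵐ ω ∂μ, Monotone fun n : ℕ => ENNReal.ofReal (F n ω * g ω ^ 2) := by
      refine ae_of_all μ fun ω i j hij => ENNReal.ofReal_le_ofReal ?_
      exact mul_le_mul_of_nonneg_right (min_le_min le_rfl (Nat.cast_le.mpr hij)) (sq_nonneg _)
    have hameas : ∀ n : ℕ, AEMeasurable (fun ω => ENNReal.ofReal (F n ω * g ω ^ 2)) μ :=
      fun n =>
        (((((hF_meas n).mono hm).aestronglyMeasurable).mul hgsq.1).aemeasurable).ennreal_ofReal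
    calc ∫⁻ ω, ENNReal.ofReal ((f ω * g ω) ^ 2) ∂μ
        = ∫⁻ ω, ⨆ n, ENNReal.ofReal (F n ω * g ω ^ 2) ∂μ := by
          refine lintegral_congr fun ω => (hsup ω).symm
      _ = ⨆ n, ∫⁻ ω, ENNReal.ofReal (F n ω * g ω ^ 2) ∂μ := lintegral_iSup' hameas hmono
      _ ≤ ENNReal.ofReal (∫ ω, f ω ^ 2 * h ω ∂μ) := by
          refine iSup_le fun n => ?_
          rw [← ofReal_integral_eq_lintegral_ofReal (hFg_int n)
            (ae_of_all μ fun ω => mul_nonneg (hF_nonneg n ω) (sq_nonneg _))]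
          exact ENNReal.ofReal_le_ofReal (key n)
  have haesm : AEStronglyMeasurable (fun ω => f ω * g ω) μ :=
    ((hf.mono hm).aestronglyMeasurable).mul hg.1
  refine (memLp_two_iff_integrable_sq haesm).mpr ?_
  refine ⟨haesm.pow 2, ?_⟩
  rw [hasFiniteIntegral_iff_norm]
  calc ∫⁻ ω, ENNReal.ofReal ‖(f ω * g ω) ^ 2‖ ∂μ
      = ∫⁻ ω, ENNReal.ofReal ((f ω * g ω) ^ 2) ∂μ := by
        refine lintegral_congr fun ω => by rw [Real.norm_eq_abs, abs_of_nonneg (sq_nonneg _)]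
    _ ≤ ENNReal.ofReal (∫ ω, f ω ^ 2 * h ω ∂μ) := hlint
    _ < ⊤ := ENNReal.ofReal_lt_top

end AuxLemmas

/-- in the conditional covariance of the stock price increment with the future
gains, the increment may be replaced by its martingale part and the future increments by their
predictable parts. -/
theorem condCov_martingale_drift_parts
    {Ω : Type*} [m0 : MeasurableSpace Ω] (μ : Measure Ω) [IsProbabilityMeasure μ]
    (T : ℕ) (hT : 1 ≤ T) (ℱ : Filtration ℕ m0)
    (S : ℕ → Ω → ℝ) (hAdapted : Adapted ℱ S) (hL2 : ∀ k, MemLp (S k) 2 μ)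
    (ϑ : ℕ → Ω → ℝ) (hϑ : Admissible μ ℱ S T ϑ)
    (k : ℕ) (hk : k ∈ Finset.Icc 1 T) :
    ∀ᵐ ω ∂μ,
      condCov μ (ℱ (k - 1)) (dS S k)
          (fun ω' => ∑ i ∈ Finset.Icc (k + 1) T, ϑ i ω' * dS S i ω') ω =
        condCov μ (ℱ (k - 1)) (dM μ ℱ S k)
          (fun ω' => ∑ i ∈ Finset.Icc (k + 1) T, ϑ i ω' * dA μ ℱ S i ω') ω := by
  obtain ⟨hk1, hkT⟩ := Finset.mem_Icc.mp hk
  have hm : (ℱ (k - 1) : MeasurableSpace Ω) ≤ m0 := ℱ.le _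
  -- basic L² facts
  have hS2 : ∀ i, MemLp (dS S i) 2 μ := fun i => (hL2 i).sub (hL2 (i - 1))
  have hA2 : ∀ i, MemLp (dA μ ℱ S i) 2 μ := fun i => memℒp_two_condexp' (ℱ.le _) (hS2 i)
  have hM2 : ∀ i, MemLp (dM μ ℱ S i) 2 μ := fun i => (hS2 i).sub (hA2 i)
  -- measurability
  have hA_sm : ∀ i, StronglyMeasurable[ℱ (i - 1)] (dA μ ℱ S i) := fun i =>
    stronglyMeasurable_condExp
  have hS_sm : ∀ i, StronglyMeasurable[ℱ i] (dS S i) := fun i =>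
    ((hAdapted i).sub ((hAdapted (i - 1)).mono (ℱ.mono (Nat.sub_le i 1)) le_rfl)).stronglyMeasurable
  have hM_sm : ∀ i, StronglyMeasurable[ℱ i] (dM μ ℱ S i) := fun i =>
    (hS_sm i).sub ((hA_sm i).mono (ℱ.mono (Nat.sub_le i 1)))
  -- admissibility consequences
  have hθ_sm : ∀ i ∈ Finset.Icc 1 T, StronglyMeasurable[ℱ (i - 1)] (ϑ i) := hϑ.1
  have hθA2 : ∀ i ∈ Finset.Icc 1 T, MemLp (fun ω => ϑ i ω * dA μ ℱ S i ω) 2 μ := by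
    intro i hi
    have hterm_sm : ∀ j ∈ Finset.Icc 1 T,
        StronglyMeasurable (fun ω => |ϑ j ω * dA μ ℱ S j ω|) := fun j hj =>
      continuous_abs.comp_stronglyMeasurable
        (((hθ_sm j hj).mono (ℱ.le _)).mul ((hA_sm j).mono (ℱ.le _)))
    have hsum_sm : StronglyMeasurable
        (fun ω => ∑ j ∈ Finset.Icc 1 T, |ϑ j ω * dA μ ℱ S j ω|) :=
      Finset.stronglyMeasurable_fun_sum _ fun j hj => hterm_sm j hj
    have hsum2 : MemLp (fun ω => ∑ j ∈ Finset.Icc 1 T, |ϑ j ω * dA μ ℱ S j ω|) 2 μ :=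
      (memLp_two_iff_integrable_sq hsum_sm.aestronglyMeasurable).mpr hϑ.2.2
    refine hsum2.of_le
      ((((hθ_sm i hi).mono (ℱ.le _)).mul ((hA_sm i).mono (ℱ.le _))).aestronglyMeasurable) ?_
    refine ae_of_all μ fun ω => ?_
    rw [Real.norm_eq_abs, Real.norm_eq_abs]
    exact (Finset.single_le_sum (f := fun j => |ϑ j ω * dA μ ℱ S j ω|)
      (fun j _ => abs_nonneg _) hi).trans (le_abs_self _)
  have hθM2 : ∀ i ∈ Finset.Icc 1 T, MemLp (fun ω => ϑ i ω * dM μ ℱ S i ω) 2 μ := by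
    intro i hi
    refine memℒp_two_mul_of_integrable_sq_condexp' (ℱ.le (i - 1)) (hθ_sm i hi) (hM2 i) ?_
    -- extract the `i`-th term of the admissible sum
    have hterm_sm : ∀ j ∈ Finset.Icc 1 T, StronglyMeasurable
        (fun ω => ϑ j ω ^ 2 * (μ[fun ω' => dM μ ℱ S j ω' ^ 2|ℱ (j - 1)]) ω) := fun j hj => by
      have h1 : StronglyMeasurable (fun ω => ϑ j ω ^ 2) := by
        exact ((hθ_sm j hj).mono (ℱ.le _)).pow 2
      exact h1.mul (stronglyMeasurable_condExp.mono (ℱ.le _))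
    have hterm_nonneg : ∀ j, 0 ≤ᵐ[μ]
        fun ω => ϑ j ω ^ 2 * (μ[fun ω' => dM μ ℱ S j ω' ^ 2|ℱ (j - 1)]) ω := by
      intro j
      have := condExp_nonneg (μ := μ) (m := ℱ (j - 1))
        (f := fun ω' => dM μ ℱ S j ω' ^ 2) (ae_of_all μ fun ω => sq_nonneg _)
      filter_upwards [this] with ω hω
      exact mul_nonneg (sq_nonneg _) hω
    have hall : ∀ᵐ ω ∂μ, ∀ j ∈ (Finset.Icc 1 T : Set ℕ),
        0 ≤ ϑ j ω ^ 2 * (μ[fun ω' => dM μ ℱ S j ω' ^ 2|ℱ (j - 1)]) ω :=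
      (ae_ball_iff (Finset.countable_toSet (Finset.Icc 1 T))).mpr fun j _ => hterm_nonneg j
    refine hϑ.2.1.mono' (hterm_sm i hi).aestronglyMeasurable ?_
    filter_upwards [hall] with ω hω
    rw [Real.norm_eq_abs, abs_of_nonneg (hω i (Finset.mem_coe.mpr hi))]
    exact Finset.single_le_sum (fun j hj => hω j (Finset.mem_coe.mpr hj)) hi
  -- ϑ i * dS i is in L²
  have hθS2 : ∀ i ∈ Finset.Icc 1 T, MemLp (fun ω => ϑ i ω * dS S i ω) 2 μ := by
    intro i hi
    have h := (hθM2 i hi).add (hθA2 i hi)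
    refine MemLp.ae_eq (ae_of_all μ fun ω => ?_) h
    show ϑ i ω * dM μ ℱ S i ω + ϑ i ω * dA μ ℱ S i ω = ϑ i ω * dS S i ω
    simp only [dM]; ring
  have hsub : ∀ i ∈ Finset.Icc (k + 1) T, i ∈ Finset.Icc 1 T := by
    intro i hi
    rw [Finset.mem_Icc] at hi ⊢
    omega
  set G : Ω → ℝ := fun ω => ∑ i ∈ Finset.Icc (k + 1) T, ϑ i ω * dS S i ω with hG
  set GM : Ω → ℝ := fun ω => ∑ i ∈ Finset.Icc (k + 1) T, ϑ i ω * dM μ ℱ S i ω with hGMdef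
  set GA : Ω → ℝ := fun ω => ∑ i ∈ Finset.Icc (k + 1) T, ϑ i ω * dA μ ℱ S i ω with hGAdef
  have hG2 : MemLp G 2 μ := memLp_finsetSum _ fun i hi => hθS2 i (hsub i hi)
  have hGM2 : MemLp GM 2 μ := memLp_finsetSum _ fun i hi => hθM2 i (hsub i hi)
  have hGA2 : MemLp GA 2 μ := memLp_finsetSum _ fun i hi => hθA2 i (hsub i hi)
  have hGdec : ∀ ω, G ω = GM ω + GA ω := by
    intro ω
    rw [hG, hGMdef, hGAdef]
    rw [← Finset.sum_add_distrib]
    refine Finset.sum_congr rfl fun i _ => ?_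
    simp only [dM]; ring
  -- integrability of the relevant products
  have hG_int : Integrable G μ := hG2.integrable one_le_two
  have hGM_int : Integrable GM μ := hGM2.integrable one_le_two
  have hGA_int : Integrable GA μ := hGA2.integrable one_le_two
  set P : Ω → ℝ := fun ω => dM μ ℱ S k ω * GM ω with hPdef
  set Q : Ω → ℝ := fun ω => dM μ ℱ S k ω * GA ω with hQdef
  set R : Ω → ℝ := fun ω => dA μ ℱ S k ω * G ω with hRdef
  have hP_int : Integrable P μ := integrable_mul_L2' (hM2 k) hGM2
  have hQ_int : Integrable Q μ := integrable_mul_L2' (hM2 k) hGA2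
  have hR_int : Integrable R μ := integrable_mul_L2' (hA2 k) hG2
  have hPQ_int : Integrable (fun ω => P ω + Q ω) μ := hP_int.add hQ_int
  -- martingale increments have zero conditional expectation
  have hdM0 : ∀ i, (μ[dM μ ℱ S i|ℱ (i - 1)]) =ᵐ[μ] 0 := by
    intro i
    have h1 : μ[dS S i - dA μ ℱ S i|ℱ (i - 1)] =ᵐ[μ]
        μ[dS S i|ℱ (i - 1)] - μ[dA μ ℱ S i|ℱ (i - 1)] :=
      condExp_sub ((hS2 i).integrable one_le_two) ((hA2 i).integrable one_le_two) _
    have h2 : μ[dA μ ℱ S i|ℱ (i - 1)] = dA μ ℱ S i :=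
      condExp_of_stronglyMeasurable (ℱ.le _) (hA_sm i) ((hA2 i).integrable one_le_two)
    have h3 : (μ[dM μ ℱ S i|ℱ (i - 1)]) = μ[dS S i - dA μ ℱ S i|ℱ (i - 1)] := rfl
    rw [h3]
    refine h1.trans (ae_of_all μ fun ω => ?_)
    have h4 : μ[dS S i|ℱ (i - 1)] = dA μ ℱ S i := rfl
    simp [h2, h4]
  -- conditional expectations of products with later martingale increments vanish
  have key0 : ∀ i ∈ Finset.Icc (k + 1) T, ∀ c : Ω → ℝ, StronglyMeasurable[ℱ (i - 1)] c →
      Integrable (fun ω => c ω * dM μ ℱ S i ω) μ →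
      (μ[fun ω => c ω * dM μ ℱ S i ω|ℱ (k - 1)]) =ᵐ[μ] 0 := by
    intro i hi c hc hci
    obtain ⟨hik, hiT⟩ := Finset.mem_Icc.mp hi
    have hm' : (ℱ (k - 1) : MeasurableSpace Ω) ≤ ℱ (i - 1) := ℱ.mono (by omega)
    have hpull : μ[fun ω => c ω * dM μ ℱ S i ω|ℱ (i - 1)] =ᵐ[μ] 0 := by
      have h1 : μ[fun ω => c ω * dM μ ℱ S i ω|ℱ (i - 1)] =ᵐ[μ]
          fun ω => c ω * (μ[dM μ ℱ S i|ℱ (i - 1)]) ω :=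
        condExp_mul_of_stronglyMeasurable_left hc hci ((hM2 i).integrable one_le_two)
      refine h1.trans ?_
      filter_upwards [hdM0 i] with ω hω
      simp only [Pi.zero_apply] at hω ⊢
      rw [hω, mul_zero]
    calc μ[fun ω => c ω * dM μ ℱ S i ω|ℱ (k - 1)]
        =ᵐ[μ] μ[μ[fun ω => c ω * dM μ ℱ S i ω|ℱ (i - 1)]|ℱ (k - 1)] :=
          (condExp_condExp_of_le hm' (ℱ.le _)).symm
      _ =ᵐ[μ] μ[(0 : Ω → ℝ)|ℱ (k - 1)] := condExp_congr_ae hpull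
      _ =ᵐ[μ] 0 := by rw [condExp_zero]
  -- E[GM | F_{k-1}] = 0
  have hGM0 : (μ[GM|ℱ (k - 1)]) =ᵐ[μ] 0 := by
    have hfun : GM = ∑ i ∈ Finset.Icc (k + 1) T, (fun ω => ϑ i ω * dM μ ℱ S i ω) := by
      funext ω; rw [hGMdef]; simp
    have hsum : (μ[GM|ℱ (k - 1)]) =ᵐ[μ]
        ∑ i ∈ Finset.Icc (k + 1) T, μ[fun ω => ϑ i ω * dM μ ℱ S i ω|ℱ (k - 1)] := by
      rw [hfun]
      exact condExp_finsetSum (fun i hi => (hθM2 i (hsub i hi)).integrable one_le_two) _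
    refine hsum.trans ?_
    have hae : ∀ᵐ ω ∂μ, ∀ i ∈ (Finset.Icc (k + 1) T : Set ℕ),
        (μ[fun ω' => ϑ i ω' * dM μ ℱ S i ω'|ℱ (k - 1)]) ω = 0 := by
      refine (ae_ball_iff (Finset.countable_toSet _)).mpr fun i hi => ?_
      have := key0 i (Finset.mem_coe.mp hi) (ϑ i) (hθ_sm i (hsub i (Finset.mem_coe.mp hi)))
        ((hθM2 i (hsub i (Finset.mem_coe.mp hi))).integrable one_le_two)
      filter_upwards [this] with ω hω
      simpa using hω
    filter_upwards [hae] with ω hω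
    rw [Finset.sum_apply]
    simp only [Pi.zero_apply]
    exact Finset.sum_eq_zero fun i hi => hω i (Finset.mem_coe.mpr hi)
  -- E[dM_k ⬝ GM | F_{k-1}] = 0
  have hP0 : (μ[P|ℱ (k - 1)]) =ᵐ[μ] 0 := by
    have hfun : P = ∑ i ∈ Finset.Icc (k + 1) T,
        (fun ω => (dM μ ℱ S k ω * ϑ i ω) * dM μ ℱ S i ω) := by
      funext ω
      rw [hPdef, hGMdef]
      simp only [Finset.sum_apply]
      rw [Finset.mul_sum]
      exact Finset.sum_congr rfl fun i _ => by ring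
    have hint : ∀ i ∈ Finset.Icc (k + 1) T,
        Integrable (fun ω => (dM μ ℱ S k ω * ϑ i ω) * dM μ ℱ S i ω) μ := by
      intro i hi
      have h := integrable_mul_L2' (hM2 k) (hθM2 i (hsub i hi))
      exact h.congr (ae_of_all μ fun ω => (mul_assoc _ _ _).symm)
    have hsum : (μ[P|ℱ (k - 1)]) =ᵐ[μ] ∑ i ∈ Finset.Icc (k + 1) T,
        μ[fun ω => (dM μ ℱ S k ω * ϑ i ω) * dM μ ℱ S i ω|ℱ (k - 1)] := by
      rw [hfun]
      exact condExp_finsetSum hint _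
    refine hsum.trans ?_
    have hae : ∀ᵐ ω ∂μ, ∀ i ∈ (Finset.Icc (k + 1) T : Set ℕ),
        (μ[fun ω' => (dM μ ℱ S k ω' * ϑ i ω') * dM μ ℱ S i ω'|ℱ (k - 1)]) ω = 0 := by
      refine (ae_ball_iff (Finset.countable_toSet _)).mpr fun i hi => ?_
      have hi' := Finset.mem_coe.mp hi
      obtain ⟨hik, hiT⟩ := Finset.mem_Icc.mp hi'
      have hc_sm : StronglyMeasurable[ℱ (i - 1)] (fun ω => dM μ ℱ S k ω * ϑ i ω) :=
        ((hM_sm k).mono (ℱ.mono (by omega))).mul (hθ_sm i (hsub i hi'))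
      have := key0 i hi' _ hc_sm (hint i hi')
      filter_upwards [this] with ω hω
      simpa using hω
    filter_upwards [hae] with ω hω
    rw [Finset.sum_apply]
    simp only [Pi.zero_apply]
    exact Finset.sum_eq_zero fun i hi => hω i (Finset.mem_coe.mpr hi)
  -- pull-out for the drift part
  have hRpull : (μ[R|ℱ (k - 1)]) =ᵐ[μ] fun ω => dA μ ℱ S k ω * (μ[G|ℱ (k - 1)]) ω :=
    condExp_mul_of_stronglyMeasurable_left (hA_sm k) hR_int hG_int
  -- decompositions of conditional expectations
  have hfunXG : (fun ω => dS S k ω * G ω) = fun ω => P ω + Q ω + R ω := by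
    funext ω
    have h1 : dS S k ω = dM μ ℱ S k ω + dA μ ℱ S k ω := by simp [dM]
    simp only [hPdef, hQdef, hRdef]
    rw [h1, hGdec ω]
    ring
  have e1 : (μ[fun ω => P ω + Q ω + R ω|ℱ (k - 1)]) =ᵐ[μ]
      fun ω => (μ[fun ω' => P ω' + Q ω'|ℱ (k - 1)]) ω + (μ[R|ℱ (k - 1)]) ω :=
    condExp_add hPQ_int hR_int _
  have e2 : (μ[fun ω' => P ω' + Q ω'|ℱ (k - 1)]) =ᵐ[μ]
      fun ω => (μ[P|ℱ (k - 1)]) ω + (μ[Q|ℱ (k - 1)]) ω :=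
    condExp_add hP_int hQ_int _
  have e3 : (μ[G|ℱ (k - 1)]) =ᵐ[μ] fun ω => (μ[GM|ℱ (k - 1)]) ω + (μ[GA|ℱ (k - 1)]) ω :=
    (condExp_congr_ae (ae_of_all μ fun ω => hGdec ω)).trans (condExp_add hGM_int hGA_int _)
  have hMk0 : (μ[dM μ ℱ S k|ℱ (k - 1)]) =ᵐ[μ] 0 := by
    have := hdM0 k
    exact this
  have hdSA : (μ[dS S k|ℱ (k - 1)]) = dA μ ℱ S k := rfl
  -- put everything together
  filter_upwards [e1, e2, e3, hP0, hGM0, hMk0, hRpull] with ω h1 h2 h3 h4 h5 h6 h7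
  simp only [condCov]
  rw [hfunXG, hdSA]
  rw [h1, h2, h3, h4, h7]
  simp only [Pi.zero_apply] at h5 h6 ⊢
  rw [h5, h6, h3, h5]
  ring


end TCMV
end
end

section
/- Suppose S satisfies the structure condition (SC), K_T ∈ L²(P), and K_T admits a decomposition K_T = K̂_0 + Σ_{i=1}^T ξ̂_i ΔS_i + L̂_T with K̂_0 F_0-measurable and square-integrable, ξ̂ predictable with E[Σ_{k=1}^T ξ̂_k² E[(ΔM_k)² | F_{k−1}]] < ∞ and E[(Σ_{k=1}^T |(ξ̂_k − λ_k) ΔA_k|)²] < ∞, and L̂ a square-integrable martingale with L̂_0 = 0 strongly orthogonal to M. Then the integrand ξ̂ is itself an admissible strategy, i.e. in addition E[(Σ_{k=1}^T |ξ̂_k ΔA_k|)²] < ∞, so that ξ̂ ∈ Θ and the decomposition is a Föllmer–Schweizer decomposition of K_T. -/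
open MeasureTheory Finset

noncomputable section

namespace TCMV

variable {Ω : Type*}

variable [m0 : MeasurableSpace Ω]

/-- The conditions on a decomposition `K_T = K̂_0 + ∑_{i=1}^T ξ̂_i ΔS_i + L̂_T` of the terminal
value of the mean–variance tradeoff process: `K̂_0` is `F_0`-measurable and square-integrable,
`ξ̂` is predictable with `E[∑ ξ̂_k² E[(ΔM_k)²|F_{k-1}]] < ∞` and
`E[(∑ |(ξ̂_k - λ_k) ΔA_k|)²] < ∞`, and `L̂` is a square-integrable martingale null at zero that
is strongly orthogonal to `M`. -/
def DecompOK (μ : Measure Ω) (ℱ : Filtration ℕ m0) (S : ℕ → Ω → ℝ) (T : ℕ)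
    (K0 : Ω → ℝ) (ξ : ℕ → Ω → ℝ) (L : ℕ → Ω → ℝ) : Prop :=
  StronglyMeasurable[ℱ 0] K0 ∧ MemLp K0 2 μ ∧
  (∀ k ∈ Finset.Icc 1 T, StronglyMeasurable[ℱ (k - 1)] (ξ k)) ∧
  Integrable (fun ω => ∑ k ∈ Finset.Icc 1 T,
      (ξ k ω) ^ 2 * (μ[fun ω' => (dM μ ℱ S k ω') ^ 2 | ℱ (k - 1)]) ω) μ ∧
  Integrable (fun ω =>
      (∑ k ∈ Finset.Icc 1 T, |(ξ k ω - lam μ ℱ S k ω) * dA μ ℱ S k ω|) ^ 2) μ ∧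
  Martingale L ℱ μ ∧ (∀ k, MemLp (L k) 2 μ) ∧ (∀ ω, L 0 ω = 0) ∧
  (∀ k ∈ Finset.Icc 1 T, ∀ᵐ ω ∂μ,
    (μ[fun ω' => (L k ω' - L (k - 1) ω') * dM μ ℱ S k ω' | ℱ (k - 1)]) ω = 0) ∧
  (∀ᵐ ω ∂μ, MVT μ ℱ S T ω = K0 ω + ∑ i ∈ Finset.Icc 1 T, ξ i ω * dS S i ω + L T ω)

/-- if `S` satisfies (SC), `K_T ∈ L²(P)` and `K_T` admits a decomposition as above,
then the integrand `ξ̂` is itself an admissible strategy, i.e. in addition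
`E[(∑ |ξ̂_k ΔA_k|)²] < ∞`, so that `ξ̂ ∈ Θ` and the decomposition is a Föllmer–Schweizer
decomposition of `K_T`. -/
theorem integrand_of_decomposition_admissible
    {Ω : Type*} [m0 : MeasurableSpace Ω] (μ : Measure Ω) [IsProbabilityMeasure μ]
    (T : ℕ) (hT : 1 ≤ T) (ℱ : Filtration ℕ m0)
    (S : ℕ → Ω → ℝ) (hAdapted : StronglyAdapted ℱ S) (hL2 : ∀ k, MemLp (S k) 2 μ)
    (hSC : SC μ ℱ S T) (hK2 : MemLp (MVT μ ℱ S T) 2 μ)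
    (K0 : Ω → ℝ) (ξ : ℕ → Ω → ℝ) (L : ℕ → Ω → ℝ)
    (hDec : DecompOK μ ℱ S T K0 ξ L) :
    Integrable (fun ω => (∑ k ∈ Finset.Icc 1 T, |ξ k ω * dA μ ℱ S k ω|) ^ 2) μ ∧
    Admissible μ ℱ S T ξ := by
  obtain ⟨hK0m, hK0L2, hξpred, hξint1, hξint2, hLmart, hLL2, hL0, hLorth, hdecomp⟩ := hDec
  -- nonnegativity of the conditional second moment
  have hcnn : ∀ k : ℕ, ∀ᵐ ω ∂μ,
      0 ≤ (μ[fun ω' => (dM μ ℱ S k ω') ^ 2 | ℱ (k - 1)]) ω := fun k =>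
    condExp_nonneg (ae_of_all _ fun ω => sq_nonneg _)
  have hterm : ∀ᵐ ω ∂μ, ∀ k : ℕ, 0 ≤ lam μ ℱ S k ω * dA μ ℱ S k ω := by
    rw [ae_all_iff]
    intro k
    filter_upwards [hcnn k] with ω hω
    have h1 : lam μ ℱ S k ω * dA μ ℱ S k ω
        = dA μ ℱ S k ω ^ 2 / (μ[fun ω' => (dM μ ℱ S k ω') ^ 2 | ℱ (k - 1)]) ω := by
      simp only [lam]; ring
    rw [h1]
    exact div_nonneg (sq_nonneg _) hω
  have hgMVT : (fun ω => ∑ k ∈ Finset.Icc 1 T, |lam μ ℱ S k ω * dA μ ℱ S k ω|)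
      =ᵐ[μ] MVT μ ℱ S T := by
    filter_upwards [hterm] with ω hω
    simp only [MVT]
    exact Finset.sum_congr rfl fun k _ => abs_of_nonneg (hω k)
  have hgL2 : MemLp (fun ω => ∑ k ∈ Finset.Icc 1 T, |lam μ ℱ S k ω * dA μ ℱ S k ω|) 2 μ :=
    hK2.ae_eq hgMVT.symm
  have hg2int : Integrable
      (fun ω => (∑ k ∈ Finset.Icc 1 T, |lam μ ℱ S k ω * dA μ ℱ S k ω|) ^ 2) μ :=
    hgL2.integrable_sq
  -- strong measurability of the target
  have hSM : StronglyMeasurable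
      (fun ω => (∑ k ∈ Finset.Icc 1 T, |ξ k ω * dA μ ℱ S k ω|) ^ 2) := by
    refine Measurable.stronglyMeasurable ?_
    apply Measurable.pow_const
    apply Finset.measurable_sum
    intro k hk
    exact ((((hξpred k hk).mono (ℱ.le _)).measurable).mul
      ((stronglyMeasurable_condExp (m := ℱ (k-1))).mono (ℱ.le _)).measurable).abs
  -- main integrability via domination
  have hmain : Integrable
      (fun ω => (∑ k ∈ Finset.Icc 1 T, |ξ k ω * dA μ ℱ S k ω|) ^ 2) μ := by
    refine Integrable.mono' ((hξint2.const_mul 2).add (hg2int.const_mul 2))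
      hSM.aestronglyMeasurable ?_
    refine ae_of_all _ fun ω => ?_
    simp only [Pi.add_apply]
    set a := ∑ k ∈ Finset.Icc 1 T, |ξ k ω * dA μ ℱ S k ω| with ha
    set b := ∑ k ∈ Finset.Icc 1 T, |(ξ k ω - lam μ ℱ S k ω) * dA μ ℱ S k ω| with hb
    set d := ∑ k ∈ Finset.Icc 1 T, |lam μ ℱ S k ω * dA μ ℱ S k ω| with hd
    have ha0 : 0 ≤ a := Finset.sum_nonneg fun k _ => abs_nonneg _
    have hb0 : 0 ≤ b := Finset.sum_nonneg fun k _ => abs_nonneg _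
    have hd0 : 0 ≤ d := Finset.sum_nonneg fun k _ => abs_nonneg _
    have habd : a ≤ b + d := by
      rw [ha, hb, hd, ← Finset.sum_add_distrib]
      refine Finset.sum_le_sum fun k _ => ?_
      have : ξ k ω * dA μ ℱ S k ω
          = (ξ k ω - lam μ ℱ S k ω) * dA μ ℱ S k ω + lam μ ℱ S k ω * dA μ ℱ S k ω := by ring
      rw [this]
      exact abs_add_le _ _
    have : ‖a ^ 2‖ = a ^ 2 := by
      rw [Real.norm_eq_abs]; exact abs_of_nonneg (sq_nonneg _)
    rw [this]
    nlinarith [sq_nonneg (b - d)]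
  exact ⟨hmain, hξpred, hξint1, hmain⟩

end TCMV
end
end
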